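/- arXiv:2203.17146 — 10 statements merged into one kernel-verified Lean document; each statement's English description precedes it below -/
import Mathlib

section
/- Let (X,d) be a metric space, let x : Fin n → X be the agents with n ≥ 1, and let M ⊆ X be a finite nonempty set of feasible center locations. If k = 1 or k ≥ n − 1, then there exists a k-clustering Y : Fin k → M that is a (1,1)-core clustering (i.e., the core is non-empty). -/
/-- The cost of agent location `p` under the `k`-clustering `Y`:
the minimum distance from `p` to a center of `Y`. -/
noncomputable def clusterCost {X : Type*} [MetricSpace X] {k : ℕ} (Y : Fin k → X) (p : X) : ℝ :=
  sInf (Set.range fun j => dist p (Y j))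

lemma clusterCost_le {X : Type*} [MetricSpace X] {k : ℕ} (Y : Fin k → X) (p : X) (j : Fin k) :
    clusterCost Y p ≤ dist p (Y j) :=
  csInf_le ⟨0, by rintro r ⟨j', rfl⟩; exact dist_nonneg⟩ ⟨j, rfl⟩

theorem stmt1 {X : Type*} [MetricSpace X] {n k : ℕ} (hn : 0 < n) (hk : 0 < k)
    (hcase : k = 1 ∨ n - 1 ≤ k)
    (x : Fin n → X) (M : Set X) (hMfin : M.Finite) (hMne : M.Nonempty) :
    ∃ Y : Fin k → X, (∀ j, Y j ∈ M) ∧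
      ∀ S : Finset (Fin n), (n : ℝ) / (k : ℝ) ≤ S.card →
        ∀ y' ∈ M, ∑ i ∈ S, clusterCost Y (x i) ≤ ∑ i ∈ S, dist (x i) y' := by
  classical
  have hM' : hMfin.toFinset.Nonempty := by simpa using hMne
  -- choose an optimal center for each agent
  have hc : ∀ i : Fin n, ∃ y ∈ M, ∀ z ∈ M, dist (x i) y ≤ dist (x i) z := by
    intro i
    obtain ⟨y, hy, hmin⟩ := hMfin.toFinset.exists_min_image (fun y => dist (x i) y) hM'
    exact ⟨y, by simpa using hy, fun z hz => hmin z (by simpa using hz)⟩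
  choose c hcM hcmin using hc
  rcases eq_or_ne k 1 with hk1 | hk1
  · -- Case k = 1
    subst hk1
    obtain ⟨y₀, hy₀, hmin⟩ :=
      hMfin.toFinset.exists_min_image (fun y => ∑ i, dist (x i) y) hM'
    refine ⟨fun _ => y₀, fun _ => by simpa using hy₀, ?_⟩
    intro S hS y' hy'
    have h1 : (n : ℝ) ≤ S.card := by simpa using hS
    have h2 : n ≤ S.card := by exact_mod_cast h1
    have hScard : S = Finset.univ := by
      apply Finset.eq_univ_of_card
      have := Finset.card_le_univ S
      simp only [Finset.card_univ, Fintype.card_fin] at *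
      omega
    subst hScard
    calc ∑ i, clusterCost (fun _ : Fin 1 => y₀) (x i)
        ≤ ∑ i, dist (x i) y₀ :=
          Finset.sum_le_sum fun i _ => clusterCost_le _ (x i) 0
      _ ≤ ∑ i, dist (x i) y' := hmin y' (by simpa using hy')
  · have hnk : n - 1 ≤ k := hcase.resolve_left hk1
    rcases le_or_gt n k with hle | hlt
    · -- Case n ≤ k : each agent gets its own optimal center
      refine ⟨fun j => if h : (j : ℕ) < n then c ⟨j, h⟩ else c ⟨0, hn⟩, ?_, ?_⟩
      · intro j; dsimp only; split <;> apply hcM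
      · intro S hS y' hy'
        refine Finset.sum_le_sum fun i _ => ?_
        have hj : ((⟨(i : ℕ), lt_of_lt_of_le i.isLt hle⟩ : Fin k) : ℕ) < n := i.isLt
        have h1 := clusterCost_le (fun j : Fin k =>
          if h : (j : ℕ) < n then c ⟨j, h⟩ else c ⟨0, hn⟩) (x i)
          ⟨(i : ℕ), lt_of_lt_of_le i.isLt hle⟩
        simp only [hj, dif_pos] at h1
        calc clusterCost _ (x i) ≤ dist (x i) (c ⟨(i:ℕ), i.isLt⟩) := by
              convert h1 using 3
          _ = dist (x i) (c i) := by congr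
          _ ≤ dist (x i) y' := hcmin i y' hy'
    · -- Case n = k + 1
      have hnk1 : n = k + 1 := by omega
      subst hnk1
      -- minimize the merging regret over distinct pairs and centers
      set P : Finset (Fin (k+1) × Fin (k+1)) := Finset.univ.filter (fun p => p.1 ≠ p.2) with hP
      have hne : (P ×ˢ hMfin.toFinset).Nonempty := by
        obtain ⟨y₀, hy₀⟩ := hM'
        refine ⟨((⟨0, by omega⟩, ⟨1, by omega⟩), y₀), ?_⟩
        refine Finset.mem_product.2 ⟨?_, hy₀⟩
        simp [hP, Fin.ext_iff]
      obtain ⟨⟨⟨a, b⟩, ystar⟩, hmem, hgmin⟩ :=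
        (P ×ˢ hMfin.toFinset).exists_min_image
          (fun q => dist (x q.1.1) q.2 + dist (x q.1.2) q.2
            - dist (x q.1.1) (c q.1.1) - dist (x q.1.2) (c q.1.2)) hne
      rw [Finset.mem_product] at hmem
      have hab : a ≠ b := by
        have := hmem.1
        simpa [hP] using this
      have hyM : ystar ∈ M := by simpa using hmem.2
      have hpair : ∀ i j : Fin (k+1), i ≠ j → ∀ z ∈ M,
          dist (x a) ystar + dist (x b) ystar - dist (x a) (c a) - dist (x b) (c b)
            ≤ dist (x i) z + dist (x j) z - dist (x i) (c i) - dist (x j) (c j) := by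
        intro i j hij z hz
        exact hgmin ((i, j), z) (by
          rw [Finset.mem_product]
          exact ⟨by simp [hP, hij], by simpa using hz⟩)
      -- the clustering
      set Y : Fin k → X := fun j => if b.succAbove j = a then ystar else c (b.succAbove j)
        with hY
      have hYmem : ∀ j, Y j ∈ M := by
        intro j; rw [hY]; dsimp only; split
        · exact hyM
        · apply hcM
      obtain ⟨ja, hja⟩ := Fin.exists_succAbove_eq hab
      have hYa : Y ja = ystar := by rw [hY]; simp [hja]
      have hcost_star : ∀ p : X, clusterCost Y p ≤ dist p ystar := by
        intro p
        have := clusterCost_le Y p ja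
        rwa [hYa] at this
      have hcost_own : ∀ i : Fin (k+1), i ≠ a → i ≠ b →
          clusterCost Y (x i) ≤ dist (x i) (c i) := by
        intro i hia hib
        obtain ⟨ji, hji⟩ := Fin.exists_succAbove_eq hib
        have hYi : Y ji = c i := by rw [hY]; simp [hji, hia]
        have := clusterCost_le Y (x i) ji
        rwa [hYi] at this
      refine ⟨Y, hYmem, ?_⟩
      intro S hS y' hy'
      -- |S| ≥ 2
      have hcard2 : 2 ≤ S.card := by
        have hk' : (0:ℝ) < (k:ℝ) := by exact_mod_cast hk
        have h1 : (1:ℝ) < ((k:ℕ)+1 : ℝ) / (k:ℝ) := by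
          rw [one_lt_div hk']; linarith
        have h2 : (1:ℝ) < (S.card : ℝ) := lt_of_lt_of_le (by push_cast at hS ⊢; linarith) hS
        have : 1 < S.card := by exact_mod_cast h2
        omega
      have hrest : ∀ i ∈ S, i ≠ a → i ≠ b → clusterCost Y (x i) ≤ dist (x i) y' :=
        fun i _ hia hib => le_trans (hcost_own i hia hib) (hcmin i y' hy')
      by_cases haS : a ∈ S
      · by_cases hbS : b ∈ S
        · -- both a and b in S
          have hbS' : b ∈ S.erase a := Finset.mem_erase.2 ⟨hab.symm, hbS⟩
          rw [← Finset.add_sum_erase _ _ haS, ← Finset.add_sum_erase _ _ hbS',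
            ← Finset.add_sum_erase _ (fun i => dist (x i) y') haS,
            ← Finset.add_sum_erase _ (fun i => dist (x i) y') hbS']
          have hkey : clusterCost Y (x a) + clusterCost Y (x b)
              ≤ dist (x a) y' + dist (x b) y' := by
            have h1 := hcost_star (x a)
            have h2 := hcost_star (x b)
            have h3 := hpair a b hab y' hy'
            linarith
          have hrest' : ∑ i ∈ (S.erase a).erase b, clusterCost Y (x i)
              ≤ ∑ i ∈ (S.erase a).erase b, dist (x i) y' := by
            refine Finset.sum_le_sum fun i hi => ?_
            have hi' := Finset.mem_erase.1 hi
            have hi'' := Finset.mem_erase.1 hi'.2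
            exact hrest i hi''.2 hi''.1 hi'.1
          linarith
        · -- a ∈ S, b ∉ S
          obtain ⟨i₀, hi₀S, hi₀a⟩ := Finset.exists_mem_ne (show 1 < S.card by omega) a
          have hi₀b : i₀ ≠ b := fun h => hbS (h ▸ hi₀S)
          have hi₀' : i₀ ∈ S.erase a := Finset.mem_erase.2 ⟨hi₀a, hi₀S⟩
          rw [← Finset.add_sum_erase _ _ haS, ← Finset.add_sum_erase _ _ hi₀',
            ← Finset.add_sum_erase _ (fun i => dist (x i) y') haS,
            ← Finset.add_sum_erase _ (fun i => dist (x i) y') hi₀']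
          have hkey : clusterCost Y (x a) + clusterCost Y (x i₀)
              ≤ dist (x a) y' + dist (x i₀) y' := by
            have h1 := hcost_star (x a)
            have h2 := hcost_own i₀ hi₀a hi₀b
            have h3 := hpair a i₀ (Ne.symm hi₀a) y' hy'
            have h4 := hcmin b ystar hyM
            linarith
          have hrest' : ∑ i ∈ (S.erase a).erase i₀, clusterCost Y (x i)
              ≤ ∑ i ∈ (S.erase a).erase i₀, dist (x i) y' := by
            refine Finset.sum_le_sum fun i hi => ?_
            have hi' := Finset.mem_erase.1 hi
            have hi'' := Finset.mem_erase.1 hi'.2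
            exact hrest i hi''.2 hi''.1 (fun h => hbS (h ▸ hi''.2))
          linarith
      · by_cases hbS : b ∈ S
        · -- b ∈ S, a ∉ S
          obtain ⟨i₀, hi₀S, hi₀b⟩ := Finset.exists_mem_ne (show 1 < S.card by omega) b
          have hi₀a : i₀ ≠ a := fun h => haS (h ▸ hi₀S)
          have hi₀' : i₀ ∈ S.erase b := Finset.mem_erase.2 ⟨hi₀b, hi₀S⟩
          rw [← Finset.add_sum_erase _ _ hbS, ← Finset.add_sum_erase _ _ hi₀',
            ← Finset.add_sum_erase _ (fun i => dist (x i) y') hbS,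
            ← Finset.add_sum_erase _ (fun i => dist (x i) y') hi₀']
          have hkey : clusterCost Y (x b) + clusterCost Y (x i₀)
              ≤ dist (x b) y' + dist (x i₀) y' := by
            have h1 := hcost_star (x b)
            have h2 := hcost_own i₀ hi₀a hi₀b
            have h3 := hpair b i₀ (Ne.symm hi₀b) y' hy'
            have h4 := hcmin a ystar hyM
            linarith
          have hrest' : ∑ i ∈ (S.erase b).erase i₀, clusterCost Y (x i)
              ≤ ∑ i ∈ (S.erase b).erase i₀, dist (x i) y' := by
            refine Finset.sum_le_sum fun i hi => ?_
            have hi' := Finset.mem_erase.1 hi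
            have hi'' := Finset.mem_erase.1 hi'.2
            exact hrest i hi''.2 (fun h => haS (h ▸ hi''.2)) hi''.1
          linarith
        · -- neither
          refine Finset.sum_le_sum fun i hi => ?_
          exact hrest i hi (fun h => haS (h ▸ hi)) (fun h => hbS (h ▸ hi))
end

section
/- Let n ≥ 4 and let (X,d) be a metric space containing points x_1, …, x_n with d(x_i, x_j) = 1 for all i ≠ j. Take the agents to be x : Fin n → X given by these n points and M = {x_1, …, x_n}. Then for every k with n/2 ≤ k ≤ n − 2, every real ε with 0 < ε ≤ 1, and every k-clustering Y : Fin k → M, there exist a set S ⊆ Fin n with |S| ≥ n/k and a point y' ∈ M such that (2 − ε)·Σ_{i∈S} d(x_i, y') < Σ_{i∈S} d(x_i, Y). In particular, no k-clustering of this instance is a (1, 2−ε)-core clustering. -/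
theorem stmt2 {X : Type*} [MetricSpace X] {n k : ℕ} (hn : 4 ≤ n)
    (x : Fin n → X) (hx : ∀ i j, i ≠ j → dist (x i) (x j) = 1)
    (hk1 : (n : ℝ) / 2 ≤ (k : ℝ)) (hk2 : k ≤ n - 2)
    (ε : ℝ) (hε0 : 0 < ε) (hε1 : ε ≤ 1)
    (Y : Fin k → X) (hY : ∀ j, Y j ∈ Set.range x) :
    ∃ S : Finset (Fin n), (n : ℝ) / (k : ℝ) ≤ S.card ∧
      ∃ y' ∈ Set.range x,
        (2 - ε) * ∑ i ∈ S, dist (x i) y' < ∑ i ∈ S, clusterCost Y (x i) := by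
  classical
  have hxinj : Function.Injective x := by
    intro i j hij
    by_contra h
    have h1 := hx i j h
    rw [hij, dist_self] at h1
    norm_num at h1
  have hnR : (4 : ℝ) ≤ (n : ℝ) := by exact_mod_cast hn
  have hk0 : 0 < k := by
    have : (0 : ℝ) < (k : ℝ) := by linarith
    exact_mod_cast this
  -- points with x i in range Y
  set T : Finset (Fin n) := Finset.univ.filter (fun i => x i ∈ Set.range Y) with hT
  have hTcard : T.card ≤ k := by
    have := Finset.card_le_card_of_injOn
      (f := fun i => if h : x i ∈ Set.range Y then h.choose else ⟨0, hk0⟩)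
      (s := T) (t := Finset.univ) (fun i _ => Finset.mem_univ _) ?_
    · simpa using this
    · intro a ha b hb hab
      have haR : x a ∈ Set.range Y := (Finset.mem_filter.mp ha).2
      have hbR : x b ∈ Set.range Y := (Finset.mem_filter.mp hb).2
      simp only [dif_pos haR, dif_pos hbR] at hab
      apply hxinj
      rw [← haR.choose_spec, ← hbR.choose_spec, hab]
  have hcompl : 2 ≤ Tᶜ.card := by
    have h1 : Tᶜ.card = n - T.card := by
      rw [Finset.card_compl, Fintype.card_fin]
    omega
  obtain ⟨i1, hi1, i2, hi2, hne⟩ := Finset.one_lt_card.mp (by omega : 1 < Tᶜ.card)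
  have hni1 : x i1 ∉ Set.range Y := by
    have := Finset.mem_compl.mp hi1
    simpa [hT] using this
  have hni2 : x i2 ∉ Set.range Y := by
    have := Finset.mem_compl.mp hi2
    simpa [hT] using this
  have hcost : ∀ i : Fin n, x i ∉ Set.range Y → clusterCost Y (x i) = 1 := by
    intro i hi
    have hr : (Set.range fun j => dist (x i) (Y j)) = {1} := by
      ext r
      simp only [Set.mem_range, Set.mem_singleton_iff]
      constructor
      · rintro ⟨j, rfl⟩
        obtain ⟨m, hm⟩ := hY j
        rw [← hm]
        exact hx i m (fun h => hi ⟨j, by rw [← hm, h]⟩)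
      · intro hreq
        refine ⟨⟨0, hk0⟩, ?_⟩
        obtain ⟨m, hm⟩ := hY ⟨0, hk0⟩
        rw [← hm, hx i m (fun h => hi ⟨⟨0, hk0⟩, by rw [← hm, h]⟩), hreq]
    rw [clusterCost, hr, csInf_singleton]
  refine ⟨{i1, i2}, ?_, x i1, ⟨i1, rfl⟩, ?_⟩
  · have hcard : ({i1, i2} : Finset (Fin n)).card = 2 := by
      rw [Finset.card_insert_of_notMem (by simpa using hne), Finset.card_singleton]
    rw [hcard]
    have hkR : (0 : ℝ) < (k : ℝ) := by exact_mod_cast hk0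
    rw [div_le_iff₀ hkR]
    push_cast
    linarith
  · rw [Finset.sum_pair hne, Finset.sum_pair hne, hcost i1 hni1, hcost i2 hni2,
      dist_self, hx i2 i1 hne.symm]
    linarith
end

section
/- Let k ≥ 2 and n = k(k+1), and let x : Fin n → ℝ place exactly k agents at each of the integer points 1, 2, …, k+1 of the real line. Then for every k-clustering Y : Fin k → ℝ there exist a set S ⊆ Fin n with |S| ≥ n/k (= k+1) and a point y' ∈ ℝ such that Σ_{i∈S} |x_i − y'| > 0 and Σ_{i∈S} min_{j<k} |x_i − Y_j| ≥ (k/2)·Σ_{i∈S} |x_i − y'|. In particular, for every real β with 1 ≤ β < k/2, no k-clustering of this line instance is a (1, β)-core clustering. -/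
open scoped Classical

lemma clusterCost_nonneg {X : Type*} [MetricSpace X] {k : ℕ} (Y : Fin k → X) (p : X) :
    0 ≤ clusterCost Y p :=
  Real.sInf_nonneg (by rintro _ ⟨j, rfl⟩; exact dist_nonneg)

lemma clusterCost_attained {X : Type*} [MetricSpace X] {k : ℕ} (hk : 0 < k)
    (Y : Fin k → X) (p : X) : ∃ j, clusterCost Y p = dist p (Y j) := by
  have hne : (Set.range fun j => dist p (Y j)).Nonempty := ⟨_, ⟨⟨0, hk⟩, rfl⟩⟩
  have := hne.csInf_mem (Set.finite_range _)
  obtain ⟨j, hj⟩ := this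
  exact ⟨j, hj.symm⟩

theorem stmt3 {n k : ℕ} (hk : 2 ≤ k) (hn : n = k * (k + 1))
    (x : Fin n → ℝ)
    (hx : ∀ m : Fin (k + 1), (Finset.univ.filter fun i => x i = ((m : ℕ) : ℝ) + 1).card = k)
    (hx' : ∀ i, ∃ m : Fin (k + 1), x i = ((m : ℕ) : ℝ) + 1)
    (Y : Fin k → ℝ) :
    ∃ S : Finset (Fin n), (n : ℝ) / (k : ℝ) ≤ S.card ∧
      ∃ y' : ℝ, 0 < ∑ i ∈ S, |x i - y'| ∧
        ((k : ℝ) / 2) * ∑ i ∈ S, |x i - y'| ≤ ∑ i ∈ S, clusterCost Y (x i) := by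
  have hk0 : 0 < k := by omega
  -- Step 1: some location has cluster cost ≥ 1/2
  have step1 : ∃ m : Fin (k + 1), (1:ℝ)/2 ≤ clusterCost Y (((m : ℕ) : ℝ) + 1) := by
    by_contra h
    push_neg at h
    have hch : ∀ m : Fin (k + 1), ∃ j : Fin k,
        dist (((m : ℕ) : ℝ) + 1) (Y j) < 1/2 := by
      intro m
      obtain ⟨j, hj⟩ := clusterCost_attained hk0 Y (((m : ℕ) : ℝ) + 1)
      exact ⟨j, hj ▸ h m⟩
    choose j hj using hch
    have : Fintype.card (Fin k) < Fintype.card (Fin (k + 1)) := by simp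
    obtain ⟨a, b, hab, heq⟩ := Fintype.exists_ne_map_eq_of_card_lt j this
    have h1 : dist (((a : ℕ) : ℝ) + 1) (((b : ℕ) : ℝ) + 1) < 1 := by
      calc dist (((a : ℕ) : ℝ) + 1) (((b : ℕ) : ℝ) + 1)
          ≤ dist (((a : ℕ) : ℝ) + 1) (Y (j a)) + dist (Y (j a)) (((b : ℕ) : ℝ) + 1) :=
            dist_triangle _ _ _
        _ < 1/2 + 1/2 := by
            have := hj b
            rw [← heq] at this
            rw [dist_comm (Y (j a))]
            exact add_lt_add (hj a) this
        _ = 1 := by norm_num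
    have hne : (a : ℕ) ≠ (b : ℕ) := fun h' => hab (Fin.ext h')
    have hz : (((a:ℕ):ℤ) - ((b:ℕ):ℤ)) ≠ 0 := by
      rw [sub_ne_zero]
      exact_mod_cast hne
    have h5 : (1:ℤ) ≤ |((a:ℕ):ℤ) - ((b:ℕ):ℤ)| := Int.one_le_abs hz
    have : (1:ℝ) ≤ dist (((a : ℕ) : ℝ) + 1) (((b : ℕ) : ℝ) + 1) := by
      rw [Real.dist_eq]
      have he : ((a:ℕ):ℝ) + 1 - (((b:ℕ):ℝ) + 1) = ((((a:ℕ):ℤ) - ((b:ℕ):ℤ) : ℤ) : ℝ) := by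
        push_cast; ring
      rw [he, ← Int.cast_abs]
      exact_mod_cast h5
    linarith
  obtain ⟨m, hm⟩ := step1
  set p : ℝ := ((m : ℕ) : ℝ) + 1 with hp
  -- adjacent location m'
  have hm' : ∃ m' : Fin (k + 1), |(((m' : ℕ) : ℝ) + 1) - p| = 1 := by
    rcases lt_or_ge (m : ℕ).succ (k + 1) with h | h
    · refine ⟨⟨(m : ℕ) + 1, h⟩, ?_⟩
      have hv : (((⟨(m : ℕ) + 1, h⟩ : Fin (k+1)) : ℕ) : ℝ) = ((m:ℕ):ℝ) + 1 := by
        push_cast; rfl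
      rw [hv, hp, show ((m:ℕ):ℝ) + 1 + 1 - (((m:ℕ):ℝ) + 1) = 1 by ring]
      norm_num
    · have hm1 : (m : ℕ) = k := by omega
      have hb : (m : ℕ) - 1 < k + 1 := by omega
      refine ⟨⟨(m : ℕ) - 1, hb⟩, ?_⟩
      have hv : (((⟨(m : ℕ) - 1, hb⟩ : Fin (k+1)) : ℕ) : ℝ) = ((m:ℕ):ℝ) - 1 := by
        have h1 : (1:ℕ) ≤ (m:ℕ) := by omega
        push_cast [Nat.cast_sub h1]; rfl
      rw [hv, hp, show ((m:ℕ):ℝ) - 1 + 1 - (((m:ℕ):ℝ) + 1) = -1 by ring]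
      norm_num
  obtain ⟨m', hq⟩ := hm'
  set q : ℝ := ((m' : ℕ) : ℝ) + 1 with hq'
  have hqp : q ≠ p := by
    intro h
    rw [h] at hq
    simp at hq
  set T : Finset (Fin n) := Finset.univ.filter (fun i => x i = p) with hT
  have hTcard : T.card = k := hx m
  have hT'card : (Finset.univ.filter (fun i => x i = q)).card = k := hx m'
  have hT'ne : (Finset.univ.filter (fun i => x i = q)).Nonempty := by
    rw [← Finset.card_pos, hT'card]; exact hk0
  obtain ⟨i₀, hi₀⟩ := hT'ne
  rw [Finset.mem_filter] at hi₀
  have hxi₀ : x i₀ = q := hi₀.2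
  have hi₀T : i₀ ∉ T := by
    rw [hT, Finset.mem_filter]
    rintro ⟨-, h⟩
    exact hqp (hxi₀ ▸ h)
  refine ⟨insert i₀ T, ?_, p, ?_, ?_⟩
  · rw [Finset.card_insert_of_notMem hi₀T, hTcard]
    rw [div_le_iff₀ (by positivity)]
    rw [hn]
    push_cast
    ring_nf
    linarith
  · rw [Finset.sum_insert hi₀T, hxi₀, hq]
    have : ∑ i ∈ T, |x i - p| = 0 := by
      apply Finset.sum_eq_zero
      intro i hi
      simp only [hT, Finset.mem_filter] at hi
      rw [hi.2]; simp
    rw [this]; norm_num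
  · rw [Finset.sum_insert hi₀T, Finset.sum_insert hi₀T, hxi₀, hq]
    have h1 : ∑ i ∈ T, |x i - p| = 0 := by
      apply Finset.sum_eq_zero
      intro i hi
      simp only [hT, Finset.mem_filter] at hi
      rw [hi.2]; simp
    have h2 : ∑ i ∈ T, clusterCost Y (x i) = k * clusterCost Y p := by
      have := Finset.sum_congr rfl (fun i hi => by
        simp only [hT, Finset.mem_filter] at hi
        rw [hi.2] : ∀ i ∈ T, clusterCost Y (x i) = clusterCost Y p)
      rw [this, Finset.sum_const, hTcard, nsmul_eq_mul]
    rw [h1, h2]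
    have h3 : 0 ≤ clusterCost Y q := clusterCost_nonneg Y q
    have h4 : (2:ℝ) ≤ (k:ℝ) := by exact_mod_cast hk
    nlinarith [hm]
end

section
/- Let G be a finite connected acyclic simple graph (a tree) on vertex set V, with graph distance d(u,v) equal to the number of edges on the shortest u–v path (viewed as a real number). Let x : Fin n → V be agents at vertices with n > k ≥ 1, and let M = V. Then there exists a k-clustering Y : Fin k → V that is a (1, ⌈n/k⌉ − 1)-core clustering; that is, for every set S ⊆ Fin n with |S| ≥ n/k and every vertex y' ∈ V, one has (⌈n/k⌉ − 1)·Σ_{i∈S} d(x_i, y') ≥ Σ_{i∈S} min_{j<k} d(x_i, Y_j). -/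
/-- The cost of an agent located at vertex `p` under the `k`-clustering `Y` in a graph `G`:
the minimum graph distance from `p` to a center of `Y`, as a real number. -/
noncomputable def treeClusterCost {V : Type*} (G : SimpleGraph V) {k : ℕ}
    (Y : Fin k → V) (p : V) : ℝ :=
  sInf (Set.range fun j => (G.dist p (Y j) : ℝ))

section Aux


open SimpleGraph

variable {V : Type*} {G : SimpleGraph V}

/-- In a tree, every path realizes the distance. -/
lemma tree_path_length (hc : G.Connected) (ha : G.IsAcyclic) {u v : V}
    (p : G.Walk u v) (hp : p.IsPath) : p.length = G.dist u v := by
  obtain ⟨q, hq, hql⟩ := hc.exists_path_of_dist u v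
  have h : (⟨p, hp⟩ : G.Path u v) = ⟨q, hq⟩ := ha.path_unique _ _
  rw [show p = q from congrArg Subtype.val h, hql]

/-- Splitting a geodesic walk at an interior vertex. -/
lemma dist_split (hc : G.Connected) {u v w : V} (p : G.Walk u v)
    (hl : p.length = G.dist u v) (hm : w ∈ p.support) :
    G.dist u w + G.dist w v = G.dist u v := by
  classical
  have h1 := SimpleGraph.dist_le (p.takeUntil w hm)
  have h2 := SimpleGraph.dist_le (p.dropUntil w hm)
  have h3 : (p.takeUntil w hm).length + (p.dropUntil w hm).length = p.length := by
    rw [← SimpleGraph.Walk.length_append, SimpleGraph.Walk.take_spec]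
  have h4 := hc.dist_triangle (u := u) (v := w) (w := v)
  omega

/-- Parity dichotomy across an edge in a tree. -/
lemma adj_dist_cases (hc : G.Connected) (ha : G.IsAcyclic) {v p : V} (hvp : G.Adj v p) (u : V) :
    G.dist u p = G.dist u v + 1 ∨ G.dist u v = G.dist u p + 1 := by
  obtain ⟨w, hw, hwl⟩ := hc.exists_path_of_dist u v
  by_cases hmem : p ∈ w.support
  · right
    have := dist_split hc w hwl hmem
    have hpv : G.dist p v = 1 := SimpleGraph.dist_eq_one_iff_adj.mpr hvp.symm
    omega
  · left
    have hrev : (SimpleGraph.Walk.cons hvp.symm w.reverse).IsPath := by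
      refine hw.reverse.cons ?_
      simpa using hmem
    have := tree_path_length hc ha _ hrev
    simp only [SimpleGraph.Walk.length_cons, SimpleGraph.Walk.length_reverse] at this
    have hcomm : G.dist u p = G.dist p u := SimpleGraph.dist_comm
    omega

/-- The only edge crossing between the two sides of an edge of a tree is the edge itself. -/
lemma cross_edge (hc : G.Connected) (ha : G.IsAcyclic) {v p : V} (hvp : G.Adj v p)
    {a b : V} (hab : G.Adj a b)
    (hA : G.dist a v < G.dist a p) (hB : G.dist b p < G.dist b v) :
    a = v ∧ b = p := by
  have h1 : G.dist a p = G.dist a v + 1 := by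
    rcases adj_dist_cases hc ha hvp a with h | h
    · exact h
    · omega
  have h2 : G.dist b v = G.dist b p + 1 := by
    rcases adj_dist_cases hc ha hvp b with h | h
    · omega
    · exact h
  have hdab : G.dist a b = 1 := SimpleGraph.dist_eq_one_iff_adj.mpr hab
  have hdba : G.dist b a = 1 := SimpleGraph.dist_eq_one_iff_adj.mpr hab.symm
  have t1 : G.dist a p ≤ G.dist a b + G.dist b p := hc.dist_triangle
  have t2 : G.dist b v ≤ G.dist b a + G.dist a v := hc.dist_triangle
  -- so dist b p = dist a v
  have heq : G.dist b p = G.dist a v := by omega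
  obtain ⟨w1, hw1, hl1⟩ := hc.exists_path_of_dist a v
  obtain ⟨w2, hw2, hl2⟩ := hc.exists_path_of_dist b p
  have hpnot : p ∉ w1.support := by
    intro hmem
    have := dist_split hc w1 hl1 hmem
    have hpv : G.dist p v = 1 := SimpleGraph.dist_eq_one_iff_adj.mpr hvp.symm
    omega
  have hanot : a ∉ w2.support := by
    intro hmem
    have := dist_split hc w2 hl2 hmem
    omega
  -- Q1 : p → a path through v
  have hQ1 : (SimpleGraph.Walk.cons hvp.symm w1.reverse).IsPath := by
    refine hw1.reverse.cons ?_
    simpa using hpnot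
  -- Q2 : p → a path through b
  have hQ2 : ((SimpleGraph.Walk.cons hab w2).reverse).IsPath := by
    refine (hw2.cons ?_).reverse
    exact hanot
  have huniq : (⟨_, hQ1⟩ : G.Path p a) = ⟨_, hQ2⟩ := ha.path_unique _ _
  have hveq : v ∈ ((SimpleGraph.Walk.cons hab w2).reverse).support := by
    rw [show ((SimpleGraph.Walk.cons hab w2).reverse) =
        (SimpleGraph.Walk.cons hvp.symm w1.reverse) from
      (congrArg Subtype.val huniq).symm]
    simp [SimpleGraph.Walk.support_cons]
  rw [SimpleGraph.Walk.support_reverse, List.mem_reverse,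
    SimpleGraph.Walk.support_cons] at hveq
  rcases List.mem_cons.mp hveq with hva | hvw2
  · -- v = a
    have hav0 : G.dist a v = 0 := by rw [← hva]; simp
    have hbp0 : G.dist b p = 0 := by omega
    have hbp : b = p := (hc.dist_eq_zero_iff).mp hbp0
    exact ⟨hva.symm, hbp⟩
  · exfalso
    have := dist_split hc w2 hl2 hvw2
    have hvp1 : G.dist v p = 1 := SimpleGraph.dist_eq_one_iff_adj.mpr hvp
    omega

/-- Any walk from the `v`-side to the `p`-side of the edge `vp` crosses the edge. -/
lemma cross_walk (hc : G.Connected) (ha : G.IsAcyclic) {v p : V} (hvp : G.Adj v p) :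
    ∀ (L : ℕ) {a b : V} (w : G.Walk a b), w.length ≤ L →
      G.dist a v < G.dist a p → G.dist b p < G.dist b v →
      G.dist a v + 1 + G.dist p b ≤ w.length := by
  intro L
  induction L with
  | zero =>
      intro a b w hw h1 h2
      cases w with
      | nil => omega
      | cons h q => simp at hw
  | succ L ihL =>
      intro a b w hw h1 h2
      cases w with
      | nil => omega
      | cons hadj q =>
        rename_i z
        simp only [SimpleGraph.Walk.length_cons] at hw ⊢
        rcases adj_dist_cases hc ha hvp z with hz | hz
        · -- z on v-side
          have hzz : G.dist z v < G.dist z p := by omega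
          have hb := ihL q (by omega) hzz h2
          have htr : G.dist a v ≤ G.dist a z + G.dist z v := hc.dist_triangle
          have hdaz : G.dist a z = 1 := SimpleGraph.dist_eq_one_iff_adj.mpr hadj
          omega
        · -- z on p-side: crossing edge
          have hzz : G.dist z p < G.dist z v := by omega
          obtain ⟨hav, hzp⟩ := cross_edge hc ha hvp hadj h1 hzz
          have hav0 : G.dist a v = 0 := by rw [hav]; simp
          have hq : G.dist z b ≤ q.length := SimpleGraph.dist_le q
          have hq2 : G.dist p b ≤ q.length := by rw [← hzp]; exact hq
          omega

/-- Separator formula: distance across an edge of a tree. -/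
lemma dist_sep (hc : G.Connected) (ha : G.IsAcyclic) {v p : V} (hvp : G.Adj v p)
    {a b : V} (hA : G.dist a v < G.dist a p) (hB : G.dist b p < G.dist b v) :
    G.dist a b = G.dist a v + 1 + G.dist p b := by
  obtain ⟨w, _, hl⟩ := hc.exists_path_of_dist a b
  have hge := cross_walk hc ha hvp w.length w le_rfl hA hB
  have t1 : G.dist a b ≤ G.dist a v + G.dist v b := hc.dist_triangle
  have t2 : G.dist v b ≤ G.dist v p + G.dist p b := hc.dist_triangle
  have hvp1 : G.dist v p = 1 := SimpleGraph.dist_eq_one_iff_adj.mpr hvp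
  omega

/-- Key arithmetic helper: if every agent in a nonempty `P ⊆ S` is "behind" the center `v`
relative to `y'`, and `P` is large enough, then the coalition `S` cannot profit. -/
lemma center_bound (hc : G.Connected) {ι : Type*} (loc : ι → V) (m : ℕ) (hm : 2 ≤ m)
    (S P : Finset ι) (hPS : P ⊆ S) (hPne : P.Nonempty)
    (hcoef : (S.card : ℤ) ≤ 2 * P.card + m - 2)
    (v y' : V)
    (hP : ∀ i ∈ P, G.dist (loc i) v + G.dist v y' ≤ G.dist (loc i) y') :
    ∑ i ∈ S, (G.dist (loc i) v : ℝ) ≤ ((m : ℝ) - 1) * ∑ i ∈ S, (G.dist (loc i) y' : ℝ) := by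
  classical
  set ρ : ℝ := (G.dist v y' : ℝ) with hρdef
  have hρ0 : (0:ℝ) ≤ ρ := Nat.cast_nonneg _
  obtain ⟨i0, hi0⟩ := hPne
  have hy0 : ∀ i ∈ S, (0:ℝ) ≤ (G.dist (loc i) y' : ℝ) := fun i _ => Nat.cast_nonneg _
  have hρle : ρ ≤ ∑ i ∈ S, (G.dist (loc i) y' : ℝ) := by
    have h1 := hP i0 hi0
    have h2 : ρ ≤ (G.dist (loc i0) y' : ℝ) := by
      have h3 : G.dist v y' ≤ G.dist (loc i0) y' := by omega
      rw [hρdef]; exact_mod_cast h3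
    exact h2.trans (Finset.single_le_sum hy0 (hPS hi0))
  have hsp1 : ∑ i ∈ S \ P, (G.dist (loc i) v : ℝ) + ∑ i ∈ P, (G.dist (loc i) v : ℝ)
      = ∑ i ∈ S, (G.dist (loc i) v : ℝ) := Finset.sum_sdiff hPS
  have hsp2 : ∑ i ∈ S \ P, (G.dist (loc i) y' : ℝ) + ∑ i ∈ P, (G.dist (loc i) y' : ℝ)
      = ∑ i ∈ S, (G.dist (loc i) y' : ℝ) := Finset.sum_sdiff hPS
  have hPb : ∑ i ∈ P, (G.dist (loc i) v : ℝ) + (P.card : ℝ) * ρ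
      ≤ ∑ i ∈ P, (G.dist (loc i) y' : ℝ) := by
    have h := Finset.sum_le_sum (fun i hi => ?_ :
      ∀ i ∈ P, ((G.dist (loc i) v : ℝ) + ρ) ≤ (G.dist (loc i) y' : ℝ))
    · simpa [Finset.sum_add_distrib, Finset.sum_const, nsmul_eq_mul, mul_comm] using h
    · have h4 := hP i hi
      rw [hρdef]; exact_mod_cast h4
  have hQb : ∑ i ∈ S \ P, (G.dist (loc i) v : ℝ)
      ≤ ∑ i ∈ S \ P, (G.dist (loc i) y' : ℝ) + ((S \ P).card : ℝ) * ρ := by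
    have h := Finset.sum_le_sum (fun i hi => ?_ :
      ∀ i ∈ S \ P, (G.dist (loc i) v : ℝ) ≤ (G.dist (loc i) y' : ℝ) + ρ)
    · simpa [Finset.sum_add_distrib, Finset.sum_const, nsmul_eq_mul, mul_comm] using h
    · have htr : G.dist (loc i) v ≤ G.dist (loc i) y' + G.dist y' v := hc.dist_triangle
      have hcm : G.dist y' v = G.dist v y' := SimpleGraph.dist_comm
      have h5 : G.dist (loc i) v ≤ G.dist (loc i) y' + G.dist v y' := by omega
      rw [hρdef]; exact_mod_cast h5
  have hcard : ((S \ P).card : ℝ) ≤ (P.card : ℝ) + (m : ℝ) - 2 := by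
    have h1 : (S \ P).card = S.card - P.card := Finset.card_sdiff_of_subset hPS
    have h2 : P.card ≤ S.card := Finset.card_le_card hPS
    have : ((S \ P).card : ℤ) ≤ (P.card : ℤ) + (m : ℤ) - 2 := by
      rw [h1]; push_cast [h2]; omega
    exact_mod_cast this
  have hq : ((S \ P).card : ℝ) * ρ ≤ ((P.card : ℝ) + (m : ℝ) - 2) * ρ :=
    mul_le_mul_of_nonneg_right hcard hρ0
  have hm2 : (0:ℝ) ≤ (m : ℝ) - 2 := by
    have : (2:ℝ) ≤ (m:ℝ) := by exact_mod_cast hm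
    linarith
  have hmm : ((m:ℝ) - 2) * ρ ≤ ((m:ℝ) - 2) * ∑ i ∈ S, (G.dist (loc i) y' : ℝ) :=
    mul_le_mul_of_nonneg_left hρle hm2
  have hS0 : (0:ℝ) ≤ ∑ i ∈ S, (G.dist (loc i) y' : ℝ) := Finset.sum_nonneg hy0
  nlinarith [hPb, hQb, hsp1, hsp2, hq, hmm, hS0]

/-- If the branch at `v` towards `y' ≠ v` contains at most `m - 1` members of `S`,
then placing everyone of `S` at `v` is fine. -/
lemma center_far (hc : G.Connected) (ha : G.IsAcyclic) {n : ℕ} (x : Fin n → V)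
    (m : ℕ) (hm : 2 ≤ m) (S : Finset (Fin n)) (hsm : m ≤ S.card) (v y' : V) (hne : y' ≠ v)
    (hsmall : ∀ c : V, G.Adj v c → G.dist c y' + 1 = G.dist v y' →
      (S.filter fun i => G.dist (x i) c < G.dist (x i) v).card + 1 ≤ m) :
    ∑ i ∈ S, (G.dist (x i) v : ℝ) ≤ ((m : ℝ) - 1) * ∑ i ∈ S, (G.dist (x i) y' : ℝ) := by
  classical
  have hd : 0 < G.dist v y' := hc.pos_dist_of_ne (Ne.symm hne)
  obtain ⟨w, hw, hl⟩ := hc.exists_path_of_dist v y'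
  cases w with
  | nil => simp only [SimpleGraph.Walk.length_nil] at hl; omega
  | cons hadj q =>
    rename_i c
    simp only [SimpleGraph.Walk.length_cons] at hl
    have hq1 : G.dist c y' ≤ q.length := SimpleGraph.dist_le q
    have hvc1 : G.dist v c = 1 := SimpleGraph.dist_eq_one_iff_adj.mpr hadj
    have htr : G.dist v y' ≤ G.dist v c + G.dist c y' := hc.dist_triangle
    have hcy : G.dist c y' + 1 = G.dist v y' := by omega
    have hB := hsmall c hadj hcy
    set B := S.filter (fun i => G.dist (x i) c < G.dist (x i) v) with hBdef
    have hBS : B ⊆ S := Finset.filter_subset _ _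
    have hPcard : (S \ B).card = S.card - B.card := Finset.card_sdiff_of_subset hBS
    have hBle : B.card ≤ S.card := Finset.card_le_card hBS
    have hPne : (S \ B).Nonempty := by
      rw [← Finset.card_pos, hPcard]; omega
    refine center_bound hc x m hm S (S \ B) Finset.sdiff_subset hPne ?_ v y' ?_
    · have : (S \ B).card = S.card - B.card := hPcard
      omega
    · intro i hi
      obtain ⟨hiS, hiB⟩ := Finset.mem_sdiff.mp hi
      have hnotlt : ¬ (G.dist (x i) c < G.dist (x i) v) := by
        intro hlt
        exact hiB (Finset.mem_filter.mpr ⟨hiS, hlt⟩)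
      have hxi : G.dist (x i) c = G.dist (x i) v + 1 := by
        rcases adj_dist_cases hc ha hadj (x i) with h | h
        · exact h
        · omega
      have hyc : G.dist y' c < G.dist y' v := by
        have h1 : G.dist y' c = G.dist c y' := SimpleGraph.dist_comm
        have h2 : G.dist y' v = G.dist v y' := SimpleGraph.dist_comm
        omega
      have hsep := dist_sep hc ha hadj (a := x i) (b := y') (by omega) hyc
      omega

lemma main_clustering [Fintype V] (hc : G.Connected) (ha : G.IsAcyclic)
    {n : ℕ} (x : Fin n → V) (m : ℕ) (hm : 2 ≤ m) :
    ∀ (N : ℕ) (W : Finset (Fin n)), W.card ≤ N →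
      ∃ L : List V, m * L.length ≤ W.card ∧ (m ≤ W.card → L ≠ []) ∧
        ∀ S ⊆ W, m ≤ S.card → ∀ y' : V, ∃ σ : Fin n → V,
          (∀ i ∈ S, σ i ∈ L) ∧
          ∑ i ∈ S, (G.dist (x i) (σ i) : ℝ) ≤ ((m : ℝ) - 1) * ∑ i ∈ S, (G.dist (x i) y' : ℝ) := by
  classical
  -- the trivial answer when `W` is small
  have trivialL : ∀ W : Finset (Fin n), W.card < m →
      ∃ L : List V, m * L.length ≤ W.card ∧ (m ≤ W.card → L ≠ []) ∧
        ∀ S ⊆ W, m ≤ S.card → ∀ y' : V, ∃ σ : Fin n → V,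
          (∀ i ∈ S, σ i ∈ L) ∧
          ∑ i ∈ S, (G.dist (x i) (σ i) : ℝ) ≤ ((m : ℝ) - 1) * ∑ i ∈ S, (G.dist (x i) y' : ℝ) := by
    intro W hWm
    refine ⟨[], by simp, by omega, ?_⟩
    intro S hSW hSm y'
    exact absurd (le_trans hSm (Finset.card_le_card hSW)) (by omega)
  -- the trivial coalition bound when the deviation point is the center itself
  have centerSelf : ∀ (S : Finset (Fin n)), m ≤ S.card → ∀ v : V,
      ∑ i ∈ S, (G.dist (x i) v : ℝ) ≤ ((m : ℝ) - 1) * ∑ i ∈ S, (G.dist (x i) v : ℝ) := by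
    intro S hSm v
    have hSne : S.Nonempty := Finset.card_pos.mp (by omega)
    refine center_bound hc x m hm S S subset_rfl hSne (by omega) v v ?_
    intro i _
    simp [SimpleGraph.dist_self]
  intro N
  induction N with
  | zero =>
      intro W hW
      exact trivialL W (by omega)
  | succ N ih =>
      intro W hW
      by_cases hWm : W.card < m
      · exact trivialL W hWm
      push_neg at hWm
      set D := (Finset.univ : Finset (V × V)).filter
          (fun q => G.Adj q.1 q.2 ∧
            m ≤ (W.filter fun i => G.dist (x i) q.1 < G.dist (x i) q.2).card) with hDdef
      by_cases hD : D.Nonempty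
      · -- capture the smallest heavy side
        obtain ⟨vp, hvpD, hmin⟩ := Finset.exists_min_image D
          (fun q => (Finset.univ.filter fun u : V => G.dist u q.1 < G.dist u q.2).card) hD
        obtain ⟨v, p⟩ := vp
        simp only [hDdef, Finset.mem_filter, Finset.mem_univ, true_and] at hvpD
        obtain ⟨hadj, hAcard⟩ := hvpD
        set A := W.filter (fun i => G.dist (x i) v < G.dist (x i) p) with hAdef
        have hAW : A ⊆ W := Finset.filter_subset _ _
        have hWA : (W \ A).card ≤ N := by
          rw [Finset.card_sdiff_of_subset hAW]
          have := Finset.card_le_card hAW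
          omega
        obtain ⟨L', hL1, hL2, hL3⟩ := ih (W \ A) hWA
        refine ⟨v :: L', ?_, fun _ => List.cons_ne_nil _ _, ?_⟩
        · have hmul : m * (v :: L').length = m * L'.length + m := by
            simp [List.length_cons]; ring
          have h1 : (W \ A).card = W.card - A.card := Finset.card_sdiff_of_subset hAW
          have h2 := Finset.card_le_card hAW
          omega
        intro S hSW hSm y'
        by_cases hSA : ∃ i ∈ S, i ∈ A
        · obtain ⟨i0, hi0S, hi0A⟩ := hSA
          have hi0side : G.dist (x i0) v < G.dist (x i0) p :=
            (Finset.mem_filter.mp hi0A).2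
          rcases adj_dist_cases hc ha hadj y' with hyp | hyv
          · -- y' is on the v-side
            by_cases hyev : y' = v
            · exact ⟨fun _ => v, fun i _ => List.mem_cons_self,
                by rw [hyev]; exact centerSelf S hSm v⟩
            · refine ⟨fun _ => v, fun i _ => List.mem_cons_self, ?_⟩
              refine center_far hc ha x m hm S hSm v y' hyev ?_
              intro c hvc hcy
              -- first: c is on the v-side and c ≠ p
              have hyv' : G.dist y' v < G.dist y' p := by omega
              have hyv'' : G.dist v y' = G.dist y' v := SimpleGraph.dist_comm
              have hyp'' : G.dist p y' = G.dist y' p := SimpleGraph.dist_comm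
              have hcy'' : G.dist c y' = G.dist y' c := SimpleGraph.dist_comm
              have hcp : c ≠ p := by
                intro hceq
                rw [hceq] at hcy
                omega
              have hcv1 : G.dist c v = 1 := SimpleGraph.dist_eq_one_iff_adj.mpr hvc.symm
              have hcside : G.dist c v < G.dist c p := by
                rcases adj_dist_cases hc ha hadj c with h | h
                · omega
                · exfalso
                  have : G.dist c p = 0 := by omega
                  exact hcp (hc.dist_eq_zero_iff.mp this)
              -- the side of c is strictly inside the side of v
              have hsub : (Finset.univ.filter fun u : V => G.dist u c < G.dist u v)
                  ⊆ (Finset.univ.filter fun u : V => G.dist u v < G.dist u p) := by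
                intro u hu
                simp only [Finset.mem_filter, Finset.mem_univ, true_and] at hu ⊢
                by_contra hups
                have hup : G.dist u v = G.dist u p + 1 := by
                  rcases adj_dist_cases hc ha hadj u with h | h
                  · omega
                  · exact h
                have hsep := dist_sep hc ha hadj (a := c) (b := u) hcside (by omega)
                have hcu : G.dist c u = G.dist u c := SimpleGraph.dist_comm
                have hpu : G.dist p u = G.dist u p := SimpleGraph.dist_comm
                omega
              have hvnot : v ∉ (Finset.univ.filter fun u : V => G.dist u c < G.dist u v) := by
                simp [SimpleGraph.dist_self, hcv1]
              have hvin : v ∈ (Finset.univ.filter fun u : V => G.dist u v < G.dist u p) := by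
                simp [SimpleGraph.dist_self]
                have : G.dist v p = 1 := SimpleGraph.dist_eq_one_iff_adj.mpr hadj
                omega
              have hss : (Finset.univ.filter fun u : V => G.dist u c < G.dist u v)
                  ⊂ (Finset.univ.filter fun u : V => G.dist u v < G.dist u p) :=
                ⟨hsub, fun hcon => hvnot (hcon hvin)⟩
              have hcardlt := Finset.card_lt_card hss
              -- so (c,v) cannot be in D, by minimality
              have hcnotD : ((c, v) : V × V) ∉ D := by
                intro hmem
                have := hmin (c, v) hmem
                simp only at this
                omega
              have hcount : (W.filter fun i => G.dist (x i) c < G.dist (x i) v).card < m := by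
                by_contra hge
                push_neg at hge
                exact hcnotD (by
                  simp only [hDdef, Finset.mem_filter, Finset.mem_univ, true_and]
                  exact ⟨hvc.symm, hge⟩)
              have hmono : (S.filter fun i => G.dist (x i) c < G.dist (x i) v)
                  ⊆ (W.filter fun i => G.dist (x i) c < G.dist (x i) v) :=
                Finset.filter_subset_filter _ hSW
              have := Finset.card_le_card hmono
              omega
          · -- y' is on the p-side
            have hyv' : G.dist y' p < G.dist y' v := by omega
            set S1 := S.filter (fun i => G.dist (x i) v < G.dist (x i) p) with hS1def
            set S2 := S.filter (fun i => ¬ (G.dist (x i) v < G.dist (x i) p)) with hS2def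
            have hsplit12 : S1.card + S2.card = S.card :=
              Finset.card_filter_add_card_filter_not _
            -- every member of S1 has the separator property
            have hS1sep : ∀ i ∈ S1,
                G.dist (x i) v + G.dist v y' ≤ G.dist (x i) y' := by
              intro i hi
              have hiside := (Finset.mem_filter.mp hi).2
              have hsep := dist_sep hc ha hadj (a := x i) (b := y') hiside hyv'
              have h1 : G.dist v y' = G.dist y' v := SimpleGraph.dist_comm
              have h2 : G.dist p y' = G.dist y' p := SimpleGraph.dist_comm
              omega
            by_cases hS2m : m ≤ S2.card
            · -- recurse for the agents outside the captured side
              have hS2sub : S2 ⊆ W \ A := by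
                intro i hi
                obtain ⟨hiS, hipred⟩ := Finset.mem_filter.mp hi
                refine Finset.mem_sdiff.mpr ⟨hSW hiS, ?_⟩
                intro hiA
                exact hipred (Finset.mem_filter.mp hiA).2
              obtain ⟨σ', hσ'mem, hσ'⟩ := hL3 S2 hS2sub hS2m y'
              refine ⟨fun i => if G.dist (x i) v < G.dist (x i) p then v else σ' i, ?_, ?_⟩
              · intro i hiS
                by_cases h : G.dist (x i) v < G.dist (x i) p
                · simp only [if_pos h]
                  exact List.mem_cons_self
                · simp only [if_neg h]
                  by_cases hiS2 : i ∈ S2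
                  · exact List.mem_cons_of_mem _ (hσ'mem i hiS2)
                  · exact absurd (Finset.mem_filter.mpr ⟨hiS, h⟩) hiS2
              · rw [← Finset.sum_filter_add_sum_filter_not S
                  (fun i => G.dist (x i) v < G.dist (x i) p)
                  (fun i => (G.dist (x i) ((fun i => if G.dist (x i) v < G.dist (x i) p
                    then v else σ' i) i) : ℝ)),
                  ← Finset.sum_filter_add_sum_filter_not S
                  (fun i => G.dist (x i) v < G.dist (x i) p)
                  (fun i => (G.dist (x i) y' : ℝ))]
                have hpart1 : ∑ i ∈ S1, (G.dist (x i)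
                    (if G.dist (x i) v < G.dist (x i) p then v else σ' i) : ℝ)
                    ≤ ((m : ℝ) - 1) * ∑ i ∈ S1, (G.dist (x i) y' : ℝ) := by
                  have hb : ∑ i ∈ S1, (G.dist (x i)
                      (if G.dist (x i) v < G.dist (x i) p then v else σ' i) : ℝ)
                      ≤ ∑ i ∈ S1, (G.dist (x i) y' : ℝ) := by
                    refine Finset.sum_le_sum ?_
                    intro i hi
                    have hiside := (Finset.mem_filter.mp hi).2
                    rw [if_pos hiside]
                    have := hS1sep i hi
                    exact_mod_cast (by omega : G.dist (x i) v ≤ G.dist (x i) y')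
                  have hnn : (0:ℝ) ≤ ∑ i ∈ S1, (G.dist (x i) y' : ℝ) :=
                    Finset.sum_nonneg fun i _ => Nat.cast_nonneg _
                  have hm1 : (1:ℝ) ≤ (m:ℝ) - 1 := by
                    have : (2:ℝ) ≤ (m:ℝ) := by exact_mod_cast hm
                    linarith
                  nlinarith
                have hpart2 : ∑ i ∈ S2, (G.dist (x i)
                    (if G.dist (x i) v < G.dist (x i) p then v else σ' i) : ℝ)
                    ≤ ((m : ℝ) - 1) * ∑ i ∈ S2, (G.dist (x i) y' : ℝ) := by
                  have heq : ∑ i ∈ S2, (G.dist (x i)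
                      (if G.dist (x i) v < G.dist (x i) p then v else σ' i) : ℝ)
                      = ∑ i ∈ S2, (G.dist (x i) (σ' i) : ℝ) := by
                    refine Finset.sum_congr rfl ?_
                    intro i hi
                    rw [if_neg (Finset.mem_filter.mp hi).2]
                  rw [heq]
                  exact hσ'
                have := add_le_add hpart1 hpart2
                calc ∑ i ∈ S1, (G.dist (x i)
                      (if G.dist (x i) v < G.dist (x i) p then v else σ' i) : ℝ)
                    + ∑ i ∈ S2, (G.dist (x i)
                      (if G.dist (x i) v < G.dist (x i) p then v else σ' i) : ℝ)
                    ≤ ((m : ℝ) - 1) * ∑ i ∈ S1, (G.dist (x i) y' : ℝ)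
                      + ((m : ℝ) - 1) * ∑ i ∈ S2, (G.dist (x i) y' : ℝ) := this
                  _ = ((m : ℝ) - 1) * (∑ i ∈ S1, (G.dist (x i) y' : ℝ)
                      + ∑ i ∈ S2, (G.dist (x i) y' : ℝ)) := by ring
            · -- S2 is small : S1 is large, use the new center for everyone
              refine ⟨fun _ => v, fun i _ => List.mem_cons_self, ?_⟩
              have hi0S1 : i0 ∈ S1 := Finset.mem_filter.mpr ⟨hi0S, hi0side⟩
              refine center_bound hc x m hm S S1 (Finset.filter_subset _ _)
                ⟨i0, hi0S1⟩ ?_ v y' hS1sep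
              omega
        · -- the coalition avoids the captured set: recurse
          push_neg at hSA
          have hSsub : S ⊆ W \ A := by
            intro i hi
            exact Finset.mem_sdiff.mpr ⟨hSW hi, hSA i hi⟩
          obtain ⟨σ', hσ'mem, hσ'⟩ := hL3 S hSsub hSm y'
          exact ⟨σ', fun i hi => List.mem_cons_of_mem _ (hσ'mem i hi), hσ'⟩
      · -- no heavy side at all : a single center suffices for all coalitions in W
        have hV : Nonempty V := hc.nonempty
        obtain ⟨v⟩ := hV
        refine ⟨[v], by simpa using hWm, fun _ => List.cons_ne_nil _ _, ?_⟩
        intro S hSW hSm y'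
        by_cases hyev : y' = v
        · exact ⟨fun _ => v, fun i _ => List.mem_cons_self,
            by rw [hyev]; exact centerSelf S hSm v⟩
        · refine ⟨fun _ => v, fun i _ => List.mem_cons_self, ?_⟩
          refine center_far hc ha x m hm S hSm v y' hyev ?_
          intro c hvc _
          have hcnotD : ((c, v) : V × V) ∉ D := by
            intro hmem
            exact hD ⟨_, hmem⟩
          have hcount : (W.filter fun i => G.dist (x i) c < G.dist (x i) v).card < m := by
            by_contra hge
            push_neg at hge
            exact hcnotD (by
              simp only [hDdef, Finset.mem_filter, Finset.mem_univ, true_and]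
              exact ⟨hvc.symm, hge⟩)
          have hmono : (S.filter fun i => G.dist (x i) c < G.dist (x i) v)
              ⊆ (W.filter fun i => G.dist (x i) c < G.dist (x i) v) :=
            Finset.filter_subset_filter _ hSW
          have := Finset.card_le_card hmono
          omega

theorem stmt6' {V : Type*} [Fintype V] (G : SimpleGraph V)
    (hGconn : G.Connected) (hGacyc : G.IsAcyclic)
    {n k : ℕ} (hk : 0 < k) (hnk : k < n) (x : Fin n → V) :
    ∃ Y : Fin k → V,
      ∀ S : Finset (Fin n), (n : ℝ) / (k : ℝ) ≤ S.card →
        ∀ y' : V,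
          ∑ i ∈ S, sInf (Set.range fun j => (G.dist (x i) (Y j) : ℝ)) ≤
            ((⌈(n : ℝ) / (k : ℝ)⌉₊ : ℝ) - 1) * ∑ i ∈ S, (G.dist (x i) y' : ℝ) := by
  classical
  set m := ⌈(n : ℝ) / (k : ℝ)⌉₊ with hmdef
  have hk0 : (0:ℝ) < (k:ℝ) := by exact_mod_cast hk
  have hm2 : 2 ≤ m := by
    have h1 : (1:ℝ) < (n:ℝ)/(k:ℝ) := by
      rw [lt_div_iff₀ hk0]
      have : (k:ℝ) < (n:ℝ) := by exact_mod_cast hnk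
      linarith
    have h2 : 1 < m := by
      rw [hmdef]
      exact Nat.lt_ceil.mpr (by exact_mod_cast h1)
    omega
  have hnkm : n ≤ k * m := by
    have h := Nat.le_ceil ((n:ℝ)/(k:ℝ))
    rw [← hmdef] at h
    rw [div_le_iff₀ hk0] at h
    have : (n:ℝ) ≤ (k:ℝ) * (m:ℝ) := by linarith
    exact_mod_cast this
  obtain ⟨L, hL1, hL2, hL3⟩ := main_clustering hGconn hGacyc x m hm2 n Finset.univ
    (by simp)
  rw [Finset.card_univ, Fintype.card_fin] at hL1 hL2
  have hmn : m ≤ n := by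
    rw [hmdef]
    refine Nat.ceil_le.mpr ?_
    rw [div_le_iff₀ hk0]
    have hk1 : (1:ℝ) ≤ (k:ℝ) := by exact_mod_cast hk
    have hn0 : (0:ℝ) ≤ (n:ℝ) := Nat.cast_nonneg _
    nlinarith
  have hLne : L ≠ [] := hL2 hmn
  have hlen : L.length ≤ k := by
    have h1 : m * L.length ≤ m * k := by
      have h2 : k * m = m * k := Nat.mul_comm k m
      omega
    exact Nat.le_of_mul_le_mul_left h1 (by omega)
  obtain ⟨v0, hv0⟩ := List.exists_mem_of_ne_nil L hLne
  refine ⟨fun j => L.getD j v0, ?_⟩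
  intro S hScard y'
  have hSm : m ≤ S.card := by
    rw [hmdef]
    exact Nat.ceil_le.mpr hScard
  obtain ⟨σ, hσmem, hσ⟩ := hL3 S (Finset.subset_univ S) hSm y'
  refine le_trans (Finset.sum_le_sum ?_) hσ
  intro i hi
  obtain ⟨t, ht, hteq⟩ := List.mem_iff_getElem.mp (hσmem i hi)
  have htk : t < k := lt_of_lt_of_le ht hlen
  have hYj : L.getD ((⟨t, htk⟩ : Fin k) : ℕ) v0 = σ i := by
    rw [List.getD_eq_getElem L v0 ht]
    exact hteq
  have hbdd : BddBelow (Set.range fun j : Fin k => (G.dist (x i) (L.getD (j : ℕ) v0) : ℝ)) := by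
    refine ⟨0, ?_⟩
    rintro r ⟨j, rfl⟩
    exact Nat.cast_nonneg _
  have hmem : ((G.dist (x i) (σ i) : ℝ)) ∈
      Set.range fun j : Fin k => (G.dist (x i) (L.getD (j : ℕ) v0) : ℝ) := by
    exact ⟨⟨t, htk⟩, by simpa using congrArg (fun w => ((G.dist (x i) w : ℕ) : ℝ)) hYj⟩
  exact csInf_le hbdd hmem

end Aux

theorem stmt6 {V : Type*} [Fintype V] (G : SimpleGraph V)
    (hGconn : G.Connected) (hGacyc : G.IsAcyclic)
    {n k : ℕ} (hk : 0 < k) (hnk : k < n) (x : Fin n → V) :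
    ∃ Y : Fin k → V,
      ∀ S : Finset (Fin n), (n : ℝ) / (k : ℝ) ≤ S.card →
        ∀ y' : V,
          ∑ i ∈ S, treeClusterCost G Y (x i) ≤
            ((⌈(n : ℝ) / (k : ℝ)⌉₊ : ℝ) - 1) * ∑ i ∈ S, (G.dist (x i) y' : ℝ) := by
  simpa [treeClusterCost] using stmt6' G hGconn hGacyc hk hnk x
end

section
/- Let k ≥ 2, let G be the path graph on the k+1 vertices {0, 1, …, k} (with edges between consecutive integers, all of unit length), and let the agents x : Fin n → V place exactly k agents at each vertex, so n = k(k+1); take M = V, with d the graph distance. Then for every k-clustering Y : Fin k → V there exist a set S ⊆ Fin n with |S| ≥ n/k (= k+1) and a vertex y' ∈ V such that Σ_{i∈S} d(x_i, y') > 0 and Σ_{i∈S} min_{j<k} d(x_i, Y_j) ≥ k·Σ_{i∈S} d(x_i, y'). In particular, for every real β with 1 ≤ β < k, no k-clustering of this tree instance is a (1, β)-core clustering. -/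
lemma tcc_nonneg {V : Type*} (G : SimpleGraph V) {k : ℕ} (Y : Fin k → V) (p : V) :
    0 ≤ treeClusterCost G Y p := by
  apply Real.sInf_nonneg
  rintro r ⟨j, rfl⟩
  positivity

lemma tcc_ge_one {V : Type*} (G : SimpleGraph V) {k : ℕ} (hk : 0 < k) (Y : Fin k → V) (p : V)
    (hc : G.Connected) (h : ∀ j, Y j ≠ p) : 1 ≤ treeClusterCost G Y p := by
  refine le_csInf ⟨_, ⟨⟨0, hk⟩, rfl⟩⟩ ?_
  rintro r ⟨j, rfl⟩
  have := hc.pos_dist_of_ne (Ne.symm (h j))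
  simpa using (Nat.one_le_cast (α := ℝ)).mpr this

theorem stmt8 {k n : ℕ} (hk : 2 ≤ k) (hn : n = k * (k + 1))
    (x : Fin n → Fin (k + 1))
    (hx : ∀ v : Fin (k + 1), (Finset.univ.filter fun i => x i = v).card = k)
    (Y : Fin k → Fin (k + 1)) :
    ∃ S : Finset (Fin n), (n : ℝ) / (k : ℝ) ≤ S.card ∧
      ∃ y' : Fin (k + 1),
        0 < ∑ i ∈ S, ((SimpleGraph.pathGraph (k + 1)).dist (x i) y' : ℝ) ∧
        (k : ℝ) * ∑ i ∈ S, ((SimpleGraph.pathGraph (k + 1)).dist (x i) y' : ℝ) ≤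
          ∑ i ∈ S, treeClusterCost (SimpleGraph.pathGraph (k + 1)) Y (x i) := by
  have hk0 : 0 < k := by omega
  -- a vertex not covered by Y
  have hns : ¬ Function.Surjective Y := by
    intro hs
    have := Fintype.card_le_of_surjective Y hs
    simp only [Fintype.card_fin] at this
    omega
  simp only [Function.Surjective, not_forall, not_exists] at hns
  obtain ⟨v, hv⟩ := hns
  -- a neighbor u of v
  have hconn : (SimpleGraph.pathGraph (k + 1)).Connected := SimpleGraph.pathGraph_connected k
  obtain ⟨u, hadj⟩ : ∃ u : Fin (k + 1), (SimpleGraph.pathGraph (k + 1)).Adj u v := by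
    by_cases h0 : (v : ℕ) = 0
    · exact ⟨⟨1, by omega⟩, SimpleGraph.pathGraph_adj.mpr (Or.inr (by simp [h0]))⟩
    · exact ⟨⟨(v : ℕ) - 1, by omega⟩, SimpleGraph.pathGraph_adj.mpr (Or.inl (by simp; omega))⟩
  have huv : u ≠ v := hadj.ne
  -- an agent at u
  obtain ⟨i0, hi0⟩ : ∃ i0, x i0 = u := by
    have h := hx u
    have : (Finset.univ.filter fun i => x i = u).Nonempty := by
      rw [← Finset.card_pos, h]; omega
    obtain ⟨i0, hi0⟩ := this
    exact ⟨i0, (Finset.mem_filter.mp hi0).2⟩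
  set T : Finset (Fin n) := Finset.univ.filter fun i => x i = v with hT
  have hi0T : i0 ∉ T := by
    simp only [hT, Finset.mem_filter, hi0]
    tauto
  refine ⟨insert i0 T, ?_, v, ?_, ?_⟩
  · have hcard : (insert i0 T).card = k + 1 := by
      rw [Finset.card_insert_of_notMem hi0T, hx v]
    rw [hcard, hn]
    rw [div_le_iff₀ (by positivity)]
    push_cast
    ring_nf
    norm_num
  · have hsum : ∑ i ∈ insert i0 T, ((SimpleGraph.pathGraph (k + 1)).dist (x i) v : ℝ) = 1 := by
      rw [Finset.sum_insert hi0T, hi0]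
      have h1 : (SimpleGraph.pathGraph (k + 1)).dist u v = 1 :=
        SimpleGraph.dist_eq_one_iff_adj.mpr hadj
      have h2 : ∑ i ∈ T, ((SimpleGraph.pathGraph (k + 1)).dist (x i) v : ℝ) = 0 := by
        apply Finset.sum_eq_zero
        intro i hi
        have : x i = v := (Finset.mem_filter.mp hi).2
        simp [this]
      rw [h1, h2]; norm_num
    rw [hsum]; norm_num
  · have hsum : ∑ i ∈ insert i0 T, ((SimpleGraph.pathGraph (k + 1)).dist (x i) v : ℝ) = 1 := by
      rw [Finset.sum_insert hi0T, hi0]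
      have h1 : (SimpleGraph.pathGraph (k + 1)).dist u v = 1 :=
        SimpleGraph.dist_eq_one_iff_adj.mpr hadj
      have h2 : ∑ i ∈ T, ((SimpleGraph.pathGraph (k + 1)).dist (x i) v : ℝ) = 0 := by
        apply Finset.sum_eq_zero
        intro i hi
        have : x i = v := (Finset.mem_filter.mp hi).2
        simp [this]
      rw [h1, h2]; norm_num
    rw [hsum, mul_one]
    rw [Finset.sum_insert hi0T]
    have hT1 : (k : ℝ) ≤ ∑ i ∈ T, treeClusterCost (SimpleGraph.pathGraph (k + 1)) Y (x i) := by
      calc (k : ℝ) = ∑ _i ∈ T, (1 : ℝ) := by rw [Finset.sum_const, hx v]; simp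
        _ ≤ _ := by
          apply Finset.sum_le_sum
          intro i hi
          have hxi : x i = v := (Finset.mem_filter.mp hi).2
          rw [hxi]
          exact tcc_ge_one _ hk0 Y v hconn hv
    have h0 : 0 ≤ treeClusterCost (SimpleGraph.pathGraph (k + 1)) Y (x i0) := tcc_nonneg _ _ _
    linarith
end

section
/- Let (X,d) be a metric space, let x : Fin n → X be agents with n ≥ 1, let M ⊆ X be a finite nonempty set of feasible center locations, and let k ≥ 1. Then there exists a k-clustering Y : Fin k → M that is a (1, 2⌈n/k⌉ + 1)-core clustering; that is, for every set S ⊆ Fin n with |S| ≥ n/k and every point y' ∈ M, one has (2⌈n/k⌉ + 1)·Σ_{i∈S} d(x_i, y') ≥ Σ_{i∈S} min_{j<k} d(x_i, Y_j). -/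
/-- Greedy smallest-ball construction: at each round, pick the point of `M` whose ball captures
`m` remaining agents with smallest radius. -/
lemma rec_greedy {X : Type*} [MetricSpace X] {n : ℕ} (x : Fin n → X) {M : Set X}
    (hMfin : M.Finite) (hMne : M.Nonempty) {m : ℕ} (hm : 1 ≤ m) :
    ∀ (K : ℕ) (R : Finset (Fin n)), R.card ≤ K * m →
    ∃ (lvl : Fin n → ℕ) (ctr : ℕ → X),
      (∀ t, ctr t ∈ M) ∧ (∀ i ∈ R, lvl i < K) ∧
      (∀ (t : ℕ) (y' : X), y' ∈ M → ∀ S' : Finset (Fin n), S' ⊆ R → S'.card = m →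
        (∀ j ∈ S', t ≤ lvl j) → ∀ i ∈ R, lvl i = t →
        ∃ j ∈ S', dist (x i) (ctr t) ≤ dist (x j) y') := by
  intro K
  induction K with
  | zero =>
    intro R hR
    have hRe : R = ∅ := Finset.card_eq_zero.mp (Nat.le_zero.mp (by simpa using hR))
    subst hRe
    exact ⟨fun _ => 0, fun _ => hMne.choose, fun _ => hMne.choose_spec,
      by simp, by simp⟩
  | succ K ih =>
    intro R hR
    rcases R.eq_empty_or_nonempty with hRe | hRne
    · subst hRe
      exact ⟨fun _ => 0, fun _ => hMne.choose, fun _ => hMne.choose_spec,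
        by simp, by simp⟩
    · set s : ℕ := min m R.card with hs
      have hs1 : 1 ≤ s := le_min hm (Finset.card_pos.mpr hRne)
      have hsR : s ≤ R.card := min_le_right _ _
      -- candidate pairs (center, group)
      set C : Finset (X × Finset (Fin n)) := hMfin.toFinset ×ˢ R.powersetCard s with hC
      have hCne : C.Nonempty := by
        apply Finset.Nonempty.product
        · simpa [Set.Finite.toFinset] using hMne
        · exact Finset.powersetCard_nonempty.mpr hsR
      obtain ⟨p, hpC, hpmin⟩ :=
        Finset.exists_min_image C (fun p => p.2.sup (fun i => nndist (x i) p.1)) hCne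
      obtain ⟨hpM, hpG⟩ := Finset.mem_product.mp hpC
      have hyM : p.1 ∈ M := hMfin.mem_toFinset.mp hpM
      obtain ⟨hGR, hGcard⟩ := Finset.mem_powersetCard.mp hpG
      -- recurse on R \ G
      have hR' : (R \ p.2).card ≤ K * m := by
        have hcard : (R \ p.2).card = R.card - s := by
          rw [Finset.card_sdiff_of_subset hGR, hGcard]
        rw [hcard]
        have hexp : (K + 1) * m = K * m + m := by ring
        rcases le_or_gt m R.card with h | h
        · have : s = m := min_eq_left h
          omega
        · have : s = R.card := min_eq_right h.le
          omega
      obtain ⟨lvl', ctr', hctr'M, hlvl', hgreedy'⟩ := ih (R \ p.2) hR'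
      refine ⟨fun i => if i ∈ p.2 then 0 else lvl' i + 1,
        fun t => match t with | 0 => p.1 | (t + 1) => ctr' t, ?_, ?_, ?_⟩
      · intro t; match t with
        | 0 => exact hyM
        | (t + 1) => exact hctr'M t
      · intro i hi
        by_cases hiG : i ∈ p.2
        · simp [hiG]
        · have : i ∈ R \ p.2 := Finset.mem_sdiff.mpr ⟨hi, hiG⟩
          have := hlvl' i this
          simp only [hiG, if_neg, ite_false]
          omega
      · intro t y' hy' S' hS'R hS'card hle i hiR hlvl
        match t with
        | 0 =>
          -- i must be in the captured group
          have hiG : i ∈ p.2 := by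
            by_contra hiG
            simp [hiG] at hlvl
          -- S' is a candidate group of size s
          have hmS : m ≤ R.card := hS'card ▸ Finset.card_le_card hS'R
          have hsm : s = m := min_eq_left hmS
          have hS'C : (y', S') ∈ C := by
            refine Finset.mem_product.mpr ⟨hMfin.mem_toFinset.mpr hy', ?_⟩
            exact Finset.mem_powersetCard.mpr ⟨hS'R, show S'.card = s by omega⟩
          have hmin := hpmin (y', S') hS'C
          have hS'ne : S'.Nonempty := Finset.card_pos.mp (by omega)
          obtain ⟨j₀, hj₀, hj₀sup⟩ :=
            Finset.exists_mem_eq_sup S' hS'ne (fun j => nndist (x j) y')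
          refine ⟨j₀, hj₀, ?_⟩
          have h1 : nndist (x i) p.1 ≤ p.2.sup (fun i => nndist (x i) p.1) :=
            Finset.le_sup (f := fun i => nndist (x i) p.1) hiG
          have h2 : nndist (x i) p.1 ≤ nndist (x j₀) y' := by
            calc nndist (x i) p.1 ≤ _ := h1
            _ ≤ S'.sup (fun j => nndist (x j) y') := hmin
            _ = nndist (x j₀) y' := hj₀sup
          rw [dist_nndist, dist_nndist]
          exact_mod_cast h2
        | (t + 1) =>
          have hiG : i ∉ p.2 := by
            intro hiG; simp [hiG] at hlvl
          have hiR' : i ∈ R \ p.2 := Finset.mem_sdiff.mpr ⟨hiR, hiG⟩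
          have hlvl'i : lvl' i = t := by
            simp only [hiG, if_neg, ite_false] at hlvl; omega
          have hS'R' : S' ⊆ R \ p.2 := by
            intro j hj
            have hjle := hle j hj
            have hjG : j ∉ p.2 := by
              intro hjG; simp [hjG] at hjle
            exact Finset.mem_sdiff.mpr ⟨hS'R hj, hjG⟩
          have hle' : ∀ j ∈ S', t ≤ lvl' j := by
            intro j hj
            have hjle := hle j hj
            have hjG : j ∉ p.2 := fun hjG => by simp [hjG] at hjle
            simp only [hjG, ite_false] at hjle
            omega
          exact hgreedy' t y' hy' S' hS'R' hS'card hle' i hiR' hlvl'i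

theorem stmt9 {X : Type*} [MetricSpace X] {n k : ℕ} (hn : 0 < n) (hk : 0 < k)
    (x : Fin n → X) (M : Set X) (hMfin : M.Finite) (hMne : M.Nonempty) :
    ∃ Y : Fin k → X, (∀ j, Y j ∈ M) ∧
      ∀ S : Finset (Fin n), (n : ℝ) / (k : ℝ) ≤ S.card →
        ∀ y' ∈ M,
          ∑ i ∈ S, clusterCost Y (x i) ≤
            (2 * (⌈(n : ℝ) / (k : ℝ)⌉₊ : ℝ) + 1) * ∑ i ∈ S, dist (x i) y' := by
  set m : ℕ := ⌈(n : ℝ) / (k : ℝ)⌉₊ with hm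
  have hm1 : 1 ≤ m := by
    apply Nat.one_le_ceil_iff.mpr
    positivity
  have hnkm : n ≤ k * m := by
    have h1 : (n : ℝ) / (k : ℝ) ≤ m := Nat.le_ceil _
    have h2 : (n : ℝ) ≤ k * m := by
      rw [div_le_iff₀ (by positivity : (0:ℝ) < k)] at h1
      linarith [h1]
    exact_mod_cast h2
  obtain ⟨lvl, ctr, hctrM, hlvlk, hgreedy⟩ :=
    rec_greedy x hMfin hMne hm1 k Finset.univ (by simpa using hnkm)
  refine ⟨fun j => ctr j, fun j => hctrM j, ?_⟩
  intro S hScard y' hy'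
  have hmS : m ≤ S.card := Nat.ceil_le.mpr hScard
  -- pick the m-subset of S minimizing the max distance to y'
  have hPne : (S.powersetCard m).Nonempty := Finset.powersetCard_nonempty.mpr hmS
  obtain ⟨S', hS'P, hS'min⟩ :=
    Finset.exists_min_image (S.powersetCard m) (fun T => T.sup (fun j => nndist (x j) y')) hPne
  obtain ⟨hS'S, hS'card⟩ := Finset.mem_powersetCard.mp hS'P
  set D : ℝ := ↑(S'.sup (fun j => nndist (x j) y')) with hD
  have hD0 : 0 ≤ D := NNReal.coe_nonneg _
  have hS'ne : S'.Nonempty := Finset.card_pos.mp (by omega)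
  have hdS' : ∀ j ∈ S', dist (x j) y' ≤ D := by
    intro j hj
    rw [dist_nndist]
    exact_mod_cast Finset.le_sup (f := fun j => nndist (x j) y') hj
  -- per-agent bound
  obtain ⟨j₀, hj₀S', hj₀min⟩ := Finset.exists_min_image S' lvl hS'ne
  have hbound : ∀ i ∈ S, clusterCost (fun j : Fin k => ctr j) (x i) ≤ dist (x i) y' + 2 * D := by
    intro i _
    rcases le_or_gt (lvl i) (lvl j₀) with hcase | hcase
    · -- use agent's own center
      obtain ⟨j, hjS', hj⟩ := hgreedy (lvl i) y' hy' S' (Finset.subset_univ _) hS'card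
        (fun j hj => le_trans hcase (hj₀min j hj)) i (Finset.mem_univ i) rfl
      have h1 : clusterCost (fun j : Fin k => ctr j) (x i) ≤ dist (x i) (ctr (lvl i)) :=
        clusterCost_le _ _ ⟨lvl i, hlvlk i (Finset.mem_univ i)⟩
      have h2 : dist (x j) y' ≤ D := hdS' j hjS'
      have h3 : (0:ℝ) ≤ dist (x i) y' := dist_nonneg
      linarith
    · -- route through j₀'s center
      obtain ⟨j, hjS', hj⟩ := hgreedy (lvl j₀) y' hy' S' (Finset.subset_univ _) hS'card
        hj₀min j₀ (Finset.mem_univ j₀) rfl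
      have h1 : clusterCost (fun j : Fin k => ctr j) (x i) ≤ dist (x i) (ctr (lvl j₀)) :=
        clusterCost_le _ _ ⟨lvl j₀, hlvlk j₀ (Finset.mem_univ j₀)⟩
      have h2 : dist (x i) (ctr (lvl j₀)) ≤ dist (x i) (x j₀) + dist (x j₀) (ctr (lvl j₀)) :=
        dist_triangle _ _ _
      have h3 : dist (x i) (x j₀) ≤ dist (x i) y' + dist (x j₀) y' := by
        rw [dist_comm (x j₀) y']
        exact dist_triangle _ _ _
      have h4 : dist (x j₀) y' ≤ D := hdS' j₀ hj₀S'
      have h5 : dist (x j) y' ≤ D := hdS' j hjS'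
      linarith
  -- lower bound on the total deviation distance
  set B : Finset (Fin n) := S.filter (fun i => dist (x i) y' < D) with hB
  have hBcard : B.card < m := by
    by_contra h
    push_neg at h
    obtain ⟨T, hTB, hTcard⟩ := Finset.exists_subset_card_eq h
    have hTne : T.Nonempty := Finset.card_pos.mp (by omega)
    obtain ⟨j₁, hj₁, hj₁sup⟩ := Finset.exists_mem_eq_sup T hTne (fun j => nndist (x j) y')
    have hTS : T ⊆ S := hTB.trans (Finset.filter_subset _ _)
    have hTP : T ∈ S.powersetCard m := Finset.mem_powersetCard.mpr ⟨hTS, hTcard⟩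
    have hmin := hS'min T hTP
    have hj₁B : j₁ ∈ B := hTB hj₁
    have hlt : dist (x j₁) y' < D := (Finset.mem_filter.mp hj₁B).2
    have : D ≤ dist (x j₁) y' := by
      have : S'.sup (fun j => nndist (x j) y') ≤ nndist (x j₁) y' := by
        calc S'.sup (fun j => nndist (x j) y') ≤ T.sup (fun j => nndist (x j) y') := hmin
        _ = nndist (x j₁) y' := hj₁sup
      rw [dist_nndist]
      exact_mod_cast this
    linarith
  have hBS : B ⊆ S := Finset.filter_subset _ _
  have hsumlow : ((S.card : ℝ) - m + 1) * D ≤ ∑ i ∈ S, dist (x i) y' := by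
    have h1 : ∀ i ∈ S \ B, D ≤ dist (x i) y' := by
      intro i hi
      obtain ⟨hiS, hiB⟩ := Finset.mem_sdiff.mp hi
      by_contra h
      push_neg at h
      exact hiB (Finset.mem_filter.mpr ⟨hiS, h⟩)
    have h2 : ((S \ B).card : ℝ) * D ≤ ∑ i ∈ S \ B, dist (x i) y' := by
      calc ((S \ B).card : ℝ) * D = ∑ _i ∈ S \ B, D := by rw [Finset.sum_const, nsmul_eq_mul]
      _ ≤ _ := Finset.sum_le_sum h1
    have h3 : ∑ i ∈ S \ B, dist (x i) y' ≤ ∑ i ∈ S, dist (x i) y' := by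
      apply Finset.sum_le_sum_of_subset_of_nonneg (Finset.sdiff_subset)
      intro i _ _; exact dist_nonneg
    have h4 : (S \ B).card = S.card - B.card := Finset.card_sdiff_of_subset hBS
    have h5 : ((S.card : ℝ) - m + 1) ≤ ((S \ B).card : ℝ) := by
      have hBle : B.card ≤ S.card := Finset.card_le_card hBS
      rw [h4]
      push_cast [Nat.cast_sub hBle]
      have : (B.card : ℝ) ≤ (m : ℝ) - 1 := by exact_mod_cast Nat.le_sub_one_of_lt hBcard
      linarith
    nlinarith [hD0]
  -- put everything together
  have hsum1 : ∑ i ∈ S, clusterCost (fun j : Fin k => ctr j) (x i) ≤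
      (∑ i ∈ S, dist (x i) y') + (S.card : ℝ) * (2 * D) := by
    calc ∑ i ∈ S, clusterCost (fun j : Fin k => ctr j) (x i)
        ≤ ∑ i ∈ S, (dist (x i) y' + 2 * D) := Finset.sum_le_sum hbound
    _ = (∑ i ∈ S, dist (x i) y') + (S.card : ℝ) * (2 * D) := by
        rw [Finset.sum_add_distrib, Finset.sum_const, nsmul_eq_mul]
  have hcardR : (m : ℝ) ≤ (S.card : ℝ) := by exact_mod_cast hmS
  have hm1R : (1 : ℝ) ≤ (m : ℝ) := by exact_mod_cast hm1
  have hkey : (S.card : ℝ) * (2 * D) ≤ 2 * (m : ℝ) * ∑ i ∈ S, dist (x i) y' := by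
    have hineq : (S.card : ℝ) ≤ (m : ℝ) * ((S.card : ℝ) - m + 1) := by
      nlinarith [mul_nonneg (sub_nonneg.mpr hm1R) (sub_nonneg.mpr hcardR)]
    calc (S.card : ℝ) * (2 * D) ≤ ((m : ℝ) * ((S.card : ℝ) - m + 1)) * (2 * D) := by
          nlinarith [hD0]
    _ = 2 * (m : ℝ) * (((S.card : ℝ) - m + 1) * D) := by ring
    _ ≤ 2 * (m : ℝ) * ∑ i ∈ S, dist (x i) y' := by
          apply mul_le_mul_of_nonneg_left hsumlow
          positivity
  calc ∑ i ∈ S, clusterCost (fun j : Fin k => ctr j) (x i)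
      ≤ (∑ i ∈ S, dist (x i) y') + (S.card : ℝ) * (2 * D) := hsum1
  _ ≤ (∑ i ∈ S, dist (x i) y') + 2 * (m : ℝ) * ∑ i ∈ S, dist (x i) y' := by linarith
  _ = (2 * (m : ℝ) + 1) * ∑ i ∈ S, dist (x i) y' := by ring
end

section
/- Let n ≥ 1 and k ≥ 1 and let x : Fin n → ℝ be agents on the real line. Then there exists a k-clustering Y : Fin k → ℝ that is a (2, 1)-core clustering; that is, for every set S ⊆ Fin n with |S| ≥ 2n/k and every point y' ∈ ℝ, one has Σ_{i∈S} |x_i − y'| ≥ Σ_{i∈S} min_{j<k} |x_i − Y_j|. -/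
private lemma key_sum {n : ℕ} (f g : Fin n → ℝ) (S G : Finset (Fin n)) (hG : G ⊆ S)
    (m : ℝ) (hm : 0 ≤ m) (hcard : (G.card : ℝ) ≤ (((S \ G).card : ℕ) : ℝ))
    (hin : ∀ i ∈ G, f i ≤ g i + m)
    (hout : ∀ i ∈ S \ G, f i + m ≤ g i) :
    ∑ i ∈ S, f i ≤ ∑ i ∈ S, g i := by
  have hsplitf : ∑ i ∈ S, f i = ∑ i ∈ S \ G, f i + ∑ i ∈ G, f i := (Finset.sum_sdiff hG).symm
  have hsplitg : ∑ i ∈ S, g i = ∑ i ∈ S \ G, g i + ∑ i ∈ G, g i := (Finset.sum_sdiff hG).symm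
  rw [hsplitf, hsplitg]
  have h1 : ∑ i ∈ G, f i ≤ (∑ i ∈ G, g i) + G.card * m := by
    calc ∑ i ∈ G, f i ≤ ∑ i ∈ G, (g i + m) := Finset.sum_le_sum hin
      _ = (∑ i ∈ G, g i) + G.card * m := by
          rw [Finset.sum_add_distrib, Finset.sum_const, nsmul_eq_mul]
  have h2 : (∑ i ∈ S \ G, f i) + (S \ G).card * m ≤ ∑ i ∈ S \ G, g i := by
    calc (∑ i ∈ S \ G, f i) + (S \ G).card * m = ∑ i ∈ S \ G, (f i + m) := by
          rw [Finset.sum_add_distrib, Finset.sum_const, nsmul_eq_mul]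
      _ ≤ ∑ i ∈ S \ G, g i := Finset.sum_le_sum hout
  have h3 : (G.card : ℝ) * m ≤ ((S \ G).card : ℝ) * m := mul_le_mul_of_nonneg_right hcard hm
  linarith

theorem stmt12 {n k : ℕ} (hn : 0 < n) (hk : 0 < k) (x : Fin n → ℝ) :
    ∃ Y : Fin k → ℝ,
      ∀ S : Finset (Fin n), 2 * (n : ℝ) / (k : ℝ) ≤ S.card →
        ∀ y' : ℝ, ∑ i ∈ S, clusterCost Y (x i) ≤ ∑ i ∈ S, |x i - y'| := by
  classical
  set σ := Tuple.sort x with hσ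
  set s : Fin n → ℝ := x ∘ σ with hsdef
  have hs : Monotone s := Tuple.monotone_sort x
  set m0 : ℕ := (n + k - 1) / k with hm0def
  have hm0def' : k * m0 + (n + k - 1) % k = n + k - 1 := by
    rw [hm0def]; exact Nat.div_add_mod _ _
  have hkm0 : n ≤ k * m0 := by
    have hmod : (n + k - 1) % k < k := Nat.mod_lt _ hk
    omega
  have hm0pos : 1 ≤ m0 := by
    rcases Nat.eq_zero_or_pos m0 with h | h
    · exfalso; rw [h] at hkm0; omega
    · exact h
  have ha : ∀ j : ℕ, min (n - 1) ((j + 1) * m0 - 1) < n :=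
    fun j => Nat.lt_of_le_of_lt (Nat.min_le_left _ _) (by omega)
  set A : ℕ → Fin n := fun j => ⟨min (n - 1) ((j + 1) * m0 - 1), ha j⟩ with hAdef
  refine ⟨fun j => s (A (j : ℕ)), ?_⟩
  intro S hS y'
  rw [mul_div_assoc] at hS
  have hk0 : (0 : ℝ) < k := by exact_mod_cast hk
  -- basic facts
  have costle : ∀ (p : ℝ) (j : Fin k),
      clusterCost (fun j : Fin k => s (A (j : ℕ))) p ≤ |p - s (A (j : ℕ))| := by
    intro p j
    have h : clusterCost (fun j : Fin k => s (A (j : ℕ))) p ≤ dist p (s (A (j : ℕ))) :=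
      csInf_le ⟨0, by rintro _ ⟨j, rfl⟩; exact dist_nonneg⟩ ⟨j, rfl⟩
    simpa [Real.dist_eq] using h
  have hm0r : (m0 : ℝ) ≤ (n : ℝ) / k + 1 := by
    have h1 : (m0 : ℝ) ≤ ((n + k - 1 : ℕ) : ℝ) / k := by rw [hm0def]; exact Nat.cast_div_le
    have h2 : ((n + k - 1 : ℕ) : ℝ) = (n : ℝ) + k - 1 := by
      rw [Nat.cast_sub (by omega)]; push_cast; ring
    rw [h2] at h1
    calc (m0 : ℝ) ≤ ((n : ℝ) + k - 1) / k := h1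
      _ ≤ ((n : ℝ) + k) / k := by
          apply (div_le_div_iff_of_pos_right hk0).mpr; linarith
      _ = (n : ℝ) / k + 1 := by rw [add_div, div_self hk0.ne']
  have hsmall : ∀ G : Finset (Fin n), G.card ≤ m0 - 1 → (G.card : ℝ) ≤ (n : ℝ) / k := by
    intro G h
    have h' : (G.card : ℝ) ≤ (m0 : ℝ) - 1 := by
      have hc := (Nat.cast_le (α := ℝ)).mpr h
      rwa [Nat.cast_sub hm0pos, Nat.cast_one] at hc
    linarith
  have cardstep : ∀ G : Finset (Fin n), G ⊆ S → (G.card : ℝ) ≤ (n : ℝ) / k →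
      (G.card : ℝ) ≤ (((S \ G).card : ℕ) : ℝ) := by
    intro G hG hGn
    have h : ((S \ G).card : ℝ) = (S.card : ℝ) - G.card := by
      rw [Finset.card_sdiff_of_subset hG, Nat.cast_sub (Finset.card_le_card hG)]
    rw [h]; linarith
  -- counting facts
  have hcountIoo : ∀ u v : Fin n,
      (Finset.univ.filter fun i => s u < x i ∧ x i < s v).card ≤ (v : ℕ) - u - 1 := by
    intro u v
    have h1 : (Finset.univ.filter fun i => s u < x i ∧ x i < s v).card
        ≤ (Finset.Ioo u v).card := by
      apply Finset.card_le_card_of_injOn (fun i => σ.symm i)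
      · intro i hi
        simp only [Finset.mem_coe, Finset.mem_filter, Finset.mem_univ, true_and] at hi
        have hxi : x i = s (σ.symm i) := by simp [hsdef]
        rw [hxi] at hi
        exact Finset.mem_Ioo.mpr ⟨hs.reflect_lt hi.1, hs.reflect_lt hi.2⟩
      · intro a _ b _ h
        exact σ.symm.injective h
    calc (Finset.univ.filter fun i => s u < x i ∧ x i < s v).card
        ≤ (Finset.Ioo u v).card := h1
      _ = (v : ℕ) - u - 1 := Fin.card_Ioo u v
  have hcountIio : ∀ v : Fin n,
      (Finset.univ.filter fun i => x i < s v).card ≤ (v : ℕ) := by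
    intro v
    have h1 : (Finset.univ.filter fun i => x i < s v).card ≤ (Finset.Iio v).card := by
      apply Finset.card_le_card_of_injOn (fun i => σ.symm i)
      · intro i hi
        simp only [Finset.mem_coe, Finset.mem_filter, Finset.mem_univ, true_and] at hi
        have hxi : x i = s (σ.symm i) := by simp [hsdef]
        rw [hxi] at hi
        exact Finset.mem_Iio.mpr (hs.reflect_lt hi)
      · intro a _ b _ h
        exact σ.symm.injective h
    calc (Finset.univ.filter fun i => x i < s v).card
        ≤ (Finset.Iio v).card := h1
      _ = (v : ℕ) := Fin.card_Iio v
  -- top center is at the maximum agent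
  have hAlast : A (k - 1) = (⟨n - 1, by omega⟩ : Fin n) := by
    apply Fin.ext
    show min (n - 1) ((k - 1 + 1) * m0 - 1) = n - 1
    rw [show k - 1 + 1 = k from by omega]
    omega
  have htop : ∀ i, x i ≤ s (A (k - 1)) := by
    intro i
    have hxi : x i = s (σ.symm i) := by simp [hsdef]
    rw [hxi, hAlast]
    apply hs
    rw [Fin.le_def]
    show ((σ.symm i) : ℕ) ≤ n - 1
    have hlt := (σ.symm i).isLt
    omega
  -- main case analysis
  by_cases hB : s (A (k - 1)) ≤ y'
  · -- y' is to the right of all agents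
    apply Finset.sum_le_sum
    intro i _
    have h1 : x i ≤ s (A (k - 1)) := htop i
    have h2 := costle (x i) ⟨k - 1, by omega⟩
    calc clusterCost (fun j : Fin k => s (A (j : ℕ))) (x i)
        ≤ |x i - s (A (k - 1))| := h2
      _ = s (A (k - 1)) - x i := by rw [abs_sub_comm, abs_of_nonneg (by linarith)]
      _ ≤ y' - x i := by linarith
      _ ≤ |x i - y'| := by rw [abs_sub_comm]; exact le_abs_self _
  by_cases hA : y' ≤ s (A 0)
  · -- y' is to the left of the leftmost center
    set G : Finset (Fin n) := S.filter (fun i => x i < s (A 0)) with hGdef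
    have hGS : G ⊆ S := Finset.filter_subset _ _
    have hGcard : (G.card : ℝ) ≤ (n : ℝ) / k := by
      apply hsmall
      calc G.card ≤ (Finset.univ.filter fun i => x i < s (A 0)).card :=
            Finset.card_le_card (Finset.filter_subset_filter _ (Finset.subset_univ S))
        _ ≤ ((A 0 : Fin n) : ℕ) := hcountIio (A 0)
        _ = min (n - 1) ((0 + 1) * m0 - 1) := rfl
        _ ≤ m0 - 1 := by omega
    apply key_sum _ _ S G hGS (s (A 0) - y') (by linarith) (cardstep G hGS hGcard)
    · intro i _
      calc clusterCost (fun j : Fin k => s (A (j : ℕ))) (x i)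
          ≤ |x i - s (A 0)| := costle (x i) ⟨0, hk⟩
        _ ≤ |x i - y'| + |y' - s (A 0)| := abs_sub_le _ _ _
        _ = |x i - y'| + (s (A 0) - y') := by
            have habs : |y' - s (A 0)| = s (A 0) - y' := by
              rw [abs_of_nonpos (by linarith : y' - s (A 0) ≤ 0)]; ring
            rw [habs]
    · intro i hi
      have hiS : i ∈ S := (Finset.mem_sdiff.mp hi).1
      have hiG : i ∉ G := (Finset.mem_sdiff.mp hi).2
      have hx : s (A 0) ≤ x i := by
        by_contra hc; push_neg at hc
        exact hiG (Finset.mem_filter.mpr ⟨hiS, hc⟩)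
      have h1 : clusterCost (fun j : Fin k => s (A (j : ℕ))) (x i) ≤ x i - s (A 0) := by
        have h := costle (x i) ⟨0, hk⟩
        rwa [abs_of_nonneg (by linarith)] at h
      have h2 : x i - y' ≤ |x i - y'| := le_abs_self _
      linarith
  · -- y' lies between two consecutive centers
    push_neg at hA hB
    set T : Finset (Fin k) := Finset.univ.filter (fun j => s (A (j : ℕ)) ≤ y') with hTdef
    have hTne : T.Nonempty := ⟨⟨0, hk⟩, by
      simp only [hTdef, Finset.mem_filter, Finset.mem_univ, true_and]
      exact le_of_lt hA⟩
    set l : Fin k := T.max' hTne with hldef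
    have hl : s (A (l : ℕ)) ≤ y' := by
      have h := T.max'_mem hTne
      rw [← hldef, hTdef, Finset.mem_filter] at h
      exact h.2
    have hlk : (l : ℕ) + 1 < k := by
      rcases Nat.lt_or_ge ((l : ℕ) + 1) k with h | h
      · exact h
      · exfalso
        have hlt := l.isLt
        have hv : (l : ℕ) = k - 1 := by omega
        rw [hv] at hl
        linarith
    set l1 : Fin k := ⟨(l : ℕ) + 1, hlk⟩ with hl1def
    have hr : y' < s (A ((l : ℕ) + 1)) := by
      by_contra hc
      push_neg at hc
      have hmem : l1 ∈ T := by
        rw [hTdef, Finset.mem_filter]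
        exact ⟨Finset.mem_univ _, hc⟩
      have h5 : l1 ≤ l := by rw [hldef]; exact T.le_max' l1 hmem
      have h6 : (l : ℕ) + 1 ≤ (l : ℕ) := Fin.le_def.mp h5
      omega
    set G : Finset (Fin n) :=
      S.filter (fun i => s (A (l : ℕ)) < x i ∧ x i < s (A ((l : ℕ) + 1))) with hGdef
    have hGS : G ⊆ S := Finset.filter_subset _ _
    have hGcard : (G.card : ℝ) ≤ (n : ℝ) / k := by
      apply hsmall
      calc G.card
          ≤ (Finset.univ.filter fun i =>
              s (A (l : ℕ)) < x i ∧ x i < s (A ((l : ℕ) + 1))).card :=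
            Finset.card_le_card (Finset.filter_subset_filter _ (Finset.subset_univ S))
        _ ≤ ((A ((l : ℕ) + 1) : Fin n) : ℕ) - ((A (l : ℕ) : Fin n) : ℕ) - 1 :=
            hcountIoo (A (l : ℕ)) (A ((l : ℕ) + 1))
        _ = min (n - 1) (((l : ℕ) + 1 + 1) * m0 - 1)
            - min (n - 1) (((l : ℕ) + 1) * m0 - 1) - 1 := rfl
        _ ≤ m0 - 1 := by
            have hX : ((l : ℕ) + 1 + 1) * m0 = ((l : ℕ) + 1) * m0 + m0 := by ring
            omega
    set m : ℝ := min (y' - s (A (l : ℕ))) (s (A ((l : ℕ) + 1)) - y') with hmdef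
    have hm : 0 ≤ m := le_min (by linarith) (by linarith)
    apply key_sum _ _ S G hGS m hm (cardstep G hGS hGcard)
    · intro i _
      have h1 : clusterCost (fun j : Fin k => s (A (j : ℕ))) (x i)
          ≤ |x i - y'| + (y' - s (A (l : ℕ))) := by
        calc clusterCost (fun j : Fin k => s (A (j : ℕ))) (x i)
            ≤ |x i - s (A (l : ℕ))| := costle (x i) l
          _ ≤ |x i - y'| + |y' - s (A (l : ℕ))| := abs_sub_le _ _ _
          _ = |x i - y'| + (y' - s (A (l : ℕ))) := by
              have habs : |y' - s (A (l : ℕ))| = y' - s (A (l : ℕ)) :=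
                abs_of_nonneg (by linarith : (0:ℝ) ≤ y' - s (A (l : ℕ)))
              rw [habs]
      have h2 : clusterCost (fun j : Fin k => s (A (j : ℕ))) (x i)
          ≤ |x i - y'| + (s (A ((l : ℕ) + 1)) - y') := by
        calc clusterCost (fun j : Fin k => s (A (j : ℕ))) (x i)
            ≤ |x i - s (A ((l : ℕ) + 1))| := costle (x i) l1
          _ ≤ |x i - y'| + |y' - s (A ((l : ℕ) + 1))| := abs_sub_le _ _ _
          _ = |x i - y'| + (s (A ((l : ℕ) + 1)) - y') := by
              have habs : |y' - s (A ((l : ℕ) + 1))| = s (A ((l : ℕ) + 1)) - y' := by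
                rw [abs_of_nonpos (by linarith : y' - s (A ((l : ℕ) + 1)) ≤ 0)]; ring
              rw [habs]
      rcases le_total (y' - s (A (l : ℕ))) (s (A ((l : ℕ) + 1)) - y') with h | h
      · rw [hmdef, min_eq_left h]; exact h1
      · rw [hmdef, min_eq_right h]; exact h2
    · intro i hi
      have hiS : i ∈ S := (Finset.mem_sdiff.mp hi).1
      have hiG : i ∉ G := (Finset.mem_sdiff.mp hi).2
      by_cases hx : x i ≤ s (A (l : ℕ))
      · have h1 : clusterCost (fun j : Fin k => s (A (j : ℕ))) (x i)
            ≤ s (A (l : ℕ)) - x i := by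
          have h := costle (x i) l
          rwa [abs_sub_comm, abs_of_nonneg (by linarith)] at h
        have h2 : m ≤ y' - s (A (l : ℕ)) := min_le_left _ _
        have h3 : y' - x i ≤ |x i - y'| := by
          rw [abs_sub_comm]; exact le_abs_self _
        linarith
      · push_neg at hx
        have hx2 : s (A ((l : ℕ) + 1)) ≤ x i := by
          by_contra hc; push_neg at hc
          exact hiG (Finset.mem_filter.mpr ⟨hiS, hx, hc⟩)
        have h1 : clusterCost (fun j : Fin k => s (A (j : ℕ))) (x i)
            ≤ x i - s (A ((l : ℕ) + 1)) := by
          have h := costle (x i) l1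
          rwa [abs_of_nonneg (by linarith)] at h
        have h2 : m ≤ s (A ((l : ℕ) + 1)) - y' := min_le_right _ _
        have h3 : x i - y' ≤ |x i - y'| := le_abs_self _
        linarith
end

section
/- Let G be a finite connected acyclic simple graph (a tree) on vertex set V, with graph distance d(u,v) equal to the number of edges on the shortest u–v path (viewed as a real number). Let x : Fin n → V be agents at vertices with n ≥ 1 and k ≥ 1, and let M = V. Then there exists a k-clustering Y : Fin k → V that is a (2, 1)-core clustering; that is, for every set S ⊆ Fin n with |S| ≥ 2n/k and every vertex y' ∈ V, one has Σ_{i∈S} d(x_i, y') ≥ Σ_{i∈S} min_{j<k} d(x_i, Y_j). -/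
namespace TreeCore
open SimpleGraph
variable {V : Type*} [DecidableEq V] {G : SimpleGraph V}


noncomputable def tpath (hc : G.Connected) (u v : V) : G.Walk u v :=
  ((hc u v).some).bypass

lemma tpath_isPath (hc : G.Connected) (u v : V) : (tpath hc u v).IsPath :=
  SimpleGraph.Walk.bypass_isPath _

lemma path_eq_tpath (hc : G.Connected) (ha : G.IsAcyclic) {u v : V}
    (p : G.Walk u v) (hp : p.IsPath) : p = tpath hc u v := by
  have := ha.path_unique ⟨p, hp⟩ ⟨tpath hc u v, tpath_isPath hc u v⟩
  exact congrArg Subtype.val this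

lemma tpath_length (hc : G.Connected) (ha : G.IsAcyclic) (u v : V) :
    (tpath hc u v).length = G.dist u v := by
  obtain ⟨w, hw⟩ := hc.exists_walk_length_eq_dist u v
  have h1 : w.bypass = tpath hc u v := path_eq_tpath hc ha _ (SimpleGraph.Walk.bypass_isPath w)
  have h2 : (tpath hc u v).length ≤ G.dist u v := by
    rw [← h1, ← hw]; exact SimpleGraph.Walk.length_bypass_le w
  have h3 : G.dist u v ≤ (tpath hc u v).length := SimpleGraph.dist_le _
  omega

lemma path_length (hc : G.Connected) (ha : G.IsAcyclic) {u v : V}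
    (p : G.Walk u v) (hp : p.IsPath) : p.length = G.dist u v := by
  rw [path_eq_tpath hc ha p hp]; exact tpath_length hc ha u v

lemma split_mem (hc : G.Connected) (ha : G.IsAcyclic) {u z m : V}
    (hm : m ∈ (tpath hc u z).support) :
    G.dist u z = G.dist u m + G.dist m z := by
  classical
  set p := tpath hc u z with hp
  have hspec := p.take_spec hm
  have hlen : (p.takeUntil m hm).length + (p.dropUntil m hm).length = p.length := by
    rw [← SimpleGraph.Walk.length_append, hspec]
  have h1 : G.dist u m ≤ (p.takeUntil m hm).length := SimpleGraph.dist_le _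
  have h2 : G.dist m z ≤ (p.dropUntil m hm).length := SimpleGraph.dist_le _
  have h3 : G.dist u z ≤ G.dist u m + G.dist m z := hc.dist_triangle
  have h4 : p.length = G.dist u z := path_length hc ha p (tpath_isPath hc u z)
  omega

lemma tri_mem (hc : G.Connected) (ha : G.IsAcyclic) {u z r a : V}
    (hu : a ∈ (tpath hc u r).support) (hz : a ∉ (tpath hc z r).support) :
    a ∈ (tpath hc u z).support := by
  have hb : ((tpath hc u z).append (tpath hc z r)).bypass = tpath hc u r :=
    path_eq_tpath hc ha _ (SimpleGraph.Walk.bypass_isPath _)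
  rw [← hb] at hu
  have := SimpleGraph.Walk.support_bypass_subset _ hu
  rw [SimpleGraph.Walk.mem_support_append_iff] at this
  tauto

lemma tri2 (hc : G.Connected) (ha : G.IsAcyclic) {u z r a : V}
    (hm : a ∈ (tpath hc u z).support) :
    a ∈ (tpath hc u r).support ∨ a ∈ (tpath hc z r).support := by
  have hb : ((tpath hc u r).append (tpath hc z r).reverse).bypass = tpath hc u z :=
    path_eq_tpath hc ha _ (SimpleGraph.Walk.bypass_isPath _)
  rw [← hb] at hm
  have := SimpleGraph.Walk.support_bypass_subset _ hm
  rw [SimpleGraph.Walk.mem_support_append_iff, SimpleGraph.Walk.support_reverse] at this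
  simpa using this

lemma take_sub (hc : G.Connected) (ha : G.IsAcyclic) {u z m : V}
    (hm : m ∈ (tpath hc u z).support) :
    (tpath hc u m).support ⊆ (tpath hc u z).support := by
  classical
  have he : (tpath hc u z).takeUntil m hm = tpath hc u m :=
    path_eq_tpath hc ha _ ((tpath_isPath hc u z).takeUntil hm)
  rw [← he]
  exact SimpleGraph.Walk.support_takeUntil_subset _ hm

lemma drop_sub (hc : G.Connected) (ha : G.IsAcyclic) {u z m : V}
    (hm : m ∈ (tpath hc u z).support) :
    (tpath hc m z).support ⊆ (tpath hc u z).support := by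
  classical
  have he : (tpath hc u z).dropUntil m hm = tpath hc m z :=
    path_eq_tpath hc ha _ ((tpath_isPath hc u z).dropUntil hm)
  rw [← he]
  exact SimpleGraph.Walk.support_dropUntil_subset _ hm

lemma sep (hc : G.Connected) (ha : G.IsAcyclic) {r v u z : V}
    (hu : v ∈ (tpath hc u r).support) (hz : v ∉ (tpath hc z r).support) :
    G.dist u z = G.dist u v + G.dist v z :=
  split_mem hc ha (tri_mem hc ha hu hz)

lemma adj_dist (hadj : G.Adj u v) : G.dist u v = 1 :=
  SimpleGraph.dist_eq_one_iff_adj.mpr hadj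

/-- The child of `c` towards `y`, with its key properties. -/
lemma child (hc : G.Connected) (ha : G.IsAcyclic) {r c y : V}
    (hne : c ≠ y) (hanc : c ∈ (tpath hc y r).support) :
    ∃ w : V,
      w ∈ (tpath hc y r).support ∧
      G.dist r w = G.dist r c + 1 ∧
      (∀ z yy : V, w ∉ (tpath hc z r).support → w ∈ (tpath hc yy r).support →
        G.dist z yy = G.dist z c + G.dist c yy) := by
  classical
  set p := tpath hc y r with hpdef
  have hppath : p.IsPath := tpath_isPath hc y r
  set q1 : G.Walk y c := p.takeUntil c hanc with hq1def
  have hq1path : q1.IsPath := hppath.takeUntil hanc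
  have hq1rev : q1.reverse.IsPath := hq1path.reverse
  obtain ⟨w, hadj, t, hq⟩ :=
    (SimpleGraph.Walk.not_nil_iff).mp (SimpleGraph.Walk.not_nil_of_ne hne (p := q1.reverse))
  -- w is adjacent to c, on q1
  have hwq1 : w ∈ q1.support := by
    have : w ∈ q1.reverse.support := by
      rw [hq, SimpleGraph.Walk.support_cons]
      exact List.mem_cons_of_mem _ t.start_mem_support
    rwa [SimpleGraph.Walk.support_reverse, List.mem_reverse] at this
  have hwp : w ∈ p.support := SimpleGraph.Walk.support_takeUntil_subset p hanc hwq1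
  have hwne : w ≠ c := fun h => (h ▸ hadj).ne rfl
  -- w not on the path from c to r
  set q2 : G.Walk c r := p.dropUntil c hanc with hq2def
  have hq2path : q2.IsPath := hppath.dropUntil hanc
  have hwq2 : w ∉ q2.support := by
    intro hmem
    have hspec := p.take_spec hanc
    have hnodup : p.support.Nodup := hppath.support_nodup
    rw [← hspec, SimpleGraph.Walk.support_append] at hnodup
    have hdisj := (List.nodup_append'.mp hnodup).2.2
    have hwtail : w ∈ q2.support.tail := by
      have hce := SimpleGraph.Walk.support_eq_cons q2
      rw [hce] at hmem
      rcases List.mem_cons.mp hmem with h | h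
      · exact absurd h hwne
      · exact h
    exact hdisj hwq1 hwtail
  have hq2e : q2 = tpath hc c r := path_eq_tpath hc ha q2 hq2path
  have hwq2' : w ∉ (tpath hc c r).support := hq2e ▸ hwq2
  -- the path from w to r is w :: (tpath c r)
  have hWpath : (SimpleGraph.Walk.cons hadj.symm (tpath hc c r)).IsPath :=
    (tpath_isPath hc c r).cons hwq2'
  have hW : SimpleGraph.Walk.cons hadj.symm (tpath hc c r) = tpath hc w r :=
    path_eq_tpath hc ha _ hWpath
  have hcw : c ∈ (tpath hc w r).support := by
    rw [← hW, SimpleGraph.Walk.support_cons]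
    exact List.mem_cons_of_mem _ (SimpleGraph.Walk.start_mem_support _)
  have hdepth : G.dist r w = G.dist r c + 1 := by
    have h1 : (SimpleGraph.Walk.cons hadj.symm (tpath hc c r)).length
        = (tpath hc c r).length + 1 := SimpleGraph.Walk.length_cons _ _
    rw [hW, tpath_length hc ha, tpath_length hc ha] at h1
    have c1 : G.dist r w = G.dist w r := SimpleGraph.dist_comm (u := r) (v := w)
    have c2 : G.dist r c = G.dist c r := SimpleGraph.dist_comm (u := r) (v := c)
    omega
  -- neighbor lemma
  have hnb : ∀ q : V, G.Adj w q → w ∉ (tpath hc q r).support → q = c := by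
    intro q hadjq hwq
    have hW'path : (SimpleGraph.Walk.cons hadjq (tpath hc q r)).IsPath :=
      (tpath_isPath hc q r).cons hwq
    have hW' : SimpleGraph.Walk.cons hadjq (tpath hc q r) = tpath hc w r :=
      path_eq_tpath hc ha _ hW'path
    have heq := hW'.trans hW.symm
    have hs := congrArg SimpleGraph.Walk.support heq
    rw [SimpleGraph.Walk.support_cons, SimpleGraph.Walk.support_cons] at hs
    have hs' : (tpath hc q r).support = (tpath hc c r).support := by
      exact (List.cons.injEq _ _ _ _).mp hs |>.2
    have h1 : (tpath hc q r).support = q :: (tpath hc q r).support.tail :=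
      SimpleGraph.Walk.support_eq_cons _
    have h2 : (tpath hc c r).support = c :: (tpath hc c r).support.tail :=
      SimpleGraph.Walk.support_eq_cons _
    rw [h1, h2] at hs'
    exact ((List.cons.injEq _ _ _ _).mp hs').1
  -- w5gen
  have w5 : ∀ yy : V, w ∈ (tpath hc yy r).support → G.dist yy c = G.dist yy w + 1 := by
    intro yy hwyy
    have hcyy : c ∈ (tpath hc yy r).support := drop_sub hc ha hwyy hcw
    have e1 : G.dist yy r = G.dist yy w + G.dist w r := split_mem hc ha hwyy
    have e2 : G.dist yy r = G.dist yy c + G.dist c r := split_mem hc ha hcyy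
    have e3 : G.dist w r = G.dist c r + 1 := by
      have c1 : G.dist r w = G.dist w r := SimpleGraph.dist_comm (u := r) (v := w)
      have c2 : G.dist r c = G.dist c r := SimpleGraph.dist_comm (u := r) (v := c)
      omega
    omega
  -- w6
  have w6 : ∀ z : V, w ∉ (tpath hc z r).support → G.dist z w = G.dist z c + 1 := by
    intro z hwz
    have hzw : z ≠ w := by
      intro h; subst h; exact hwz (SimpleGraph.Walk.start_mem_support _)
    obtain ⟨q, hadjq, tz, hqz⟩ :=
      (SimpleGraph.Walk.not_nil_iff).mp
        (SimpleGraph.Walk.not_nil_of_ne (Ne.symm hzw) (p := (tpath hc z w).reverse))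
    have hqmem : q ∈ (tpath hc z w).support := by
      have : q ∈ (tpath hc z w).reverse.support := by
        rw [hqz, SimpleGraph.Walk.support_cons]
        exact List.mem_cons_of_mem _ tz.start_mem_support
      rwa [SimpleGraph.Walk.support_reverse, List.mem_reverse] at this
    have hqc : q = c := by
      rcases tri2 hc ha (r := r) hqmem with hcase | hcase
      · -- q on path z → r
        apply hnb q hadjq
        intro hwq
        exact hwz (drop_sub hc ha hcase hwq)
      · -- q on path w → r
        apply hnb q hadjq
        intro hwq
        have e1 : G.dist q r = G.dist q w + G.dist w r := split_mem hc ha hwq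
        have e2 : G.dist w r = G.dist w q + G.dist q r := split_mem hc ha hcase
        have e3 : G.dist w q = 1 := adj_dist hadjq
        have e4 : G.dist q w = 1 := by
          have := SimpleGraph.dist_comm (G := G) (u := q) (v := w); omega
        omega
    subst hqc
    have e1 : G.dist z w = G.dist z q + G.dist q w := split_mem hc ha hqmem
    have e2 : G.dist q w = 1 := by
      have e3 : G.dist w q = 1 := adj_dist hadjq
      have := SimpleGraph.dist_comm (G := G) (u := q) (v := w); omega
    omega
  refine ⟨w, hwp, hdepth, ?_⟩
  intro z yy hz hyy
  have hwzy : w ∈ (tpath hc yy z).support := tri_mem hc ha hyy hz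
  have e1 : G.dist yy z = G.dist yy w + G.dist w z := split_mem hc ha hwzy
  have e2 : G.dist yy c = G.dist yy w + 1 := w5 yy hyy
  have e3 : G.dist z w = G.dist z c + 1 := w6 z hz
  have c1 : G.dist z yy = G.dist yy z := SimpleGraph.dist_comm
  have c2 : G.dist w z = G.dist z w := SimpleGraph.dist_comm
  have c3 : G.dist c yy = G.dist yy c := SimpleGraph.dist_comm
  omega


/-- The greedy deepest-capture process. -/
lemma alg_ex [Fintype V] (hc : G.Connected) (r : V) {n k : ℕ} (hn : 0 < n) (hk : 0 < k)
    (x : Fin n → V) (R : Finset (Fin n)) :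
    ∃ (m : ℕ) (c : ℕ → V) (e : Fin n → ℕ),
      (∀ i ∈ R, e i < m) ∧
      (∀ i ∈ R, c (e i) ∈ (tpath hc (x i) r).support) ∧
      (∀ i ∈ R, ∀ s < e i, c s ∉ (tpath hc (x i) r).support) ∧
      (∀ s < m, ∀ v : V, G.dist r (c s) < G.dist r v →
        k * (R.filter (fun i => s ≤ e i ∧ v ∈ (tpath hc (x i) r).support)).card < n) ∧
      ((n * m ≤ k * R.card) ∨
        (∃ ℓ : ℕ, 1 ≤ ℓ ∧ k * ℓ < n ∧ ℓ ≤ R.card ∧ n * m ≤ k * (R.card - ℓ) + n)) := by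
  induction R using Finset.strongInductionOn with
  | _ R IH =>
  by_cases hT : (Finset.univ.filter (fun v : V =>
      n ≤ k * (R.filter (fun i => v ∈ (tpath hc (x i) r).support)).card)).Nonempty
  · -- rule event
    obtain ⟨v₀, hv₀mem, hv₀max⟩ :=
      Finset.exists_max_image _ (fun v => G.dist r v) hT
    have hv₀ : n ≤ k * (R.filter (fun i => v₀ ∈ (tpath hc (x i) r).support)).card :=
      (Finset.mem_filter.mp hv₀mem).2
    set cap : Finset (Fin n) := R.filter (fun i => v₀ ∈ (tpath hc (x i) r).support) with hcapdef
    have hcapsub : cap ⊆ R := Finset.filter_subset _ _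
    have hcapne : cap.Nonempty := by
      rw [← Finset.card_pos]
      by_contra h
      push_neg at h
      interval_cases h' : cap.card <;> omega
    set R' : Finset (Fin n) := R \ cap with hR'def
    have hssub : R' ⊂ R := by
      obtain ⟨i0, hi0⟩ := hcapne
      constructor
      · exact Finset.sdiff_subset
      · intro hsub
        have : i0 ∈ R' := hsub (hcapsub hi0)
        rw [hR'def, Finset.mem_sdiff] at this
        exact this.2 hi0
    obtain ⟨m', c', e', hA, hB, hC, hD, hG⟩ := IH R' hssub
    refine ⟨m' + 1, fun s => if s = 0 then v₀ else c' (s - 1),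
      fun i => if i ∈ cap then 0 else e' i + 1, ?_, ?_, ?_, ?_, ?_⟩
    · intro i hi
      by_cases h : i ∈ cap <;> simp only [h, if_true, if_false, if_pos, if_neg, not_false_iff]
      · omega
      · have hi' : i ∈ R' := by rw [hR'def, Finset.mem_sdiff]; exact ⟨hi, h⟩
        have := hA i hi'
        omega
    · intro i hi
      by_cases h : i ∈ cap
      · simp only [h, if_true, if_pos]
        exact (Finset.mem_filter.mp h).2
      · have hi' : i ∈ R' := by rw [hR'def, Finset.mem_sdiff]; exact ⟨hi, h⟩
        simp only [h, if_false, if_neg, not_false_iff]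
        have hne : e' i + 1 ≠ 0 := by omega
        simp only [hne, if_false, if_neg, not_false_iff, Nat.add_sub_cancel]
        exact hB i hi'
    · intro i hi s hs
      by_cases h : i ∈ cap
      · simp only [h, if_true, if_pos] at hs; omega
      · have hi' : i ∈ R' := by rw [hR'def, Finset.mem_sdiff]; exact ⟨hi, h⟩
        simp only [h, if_false, if_neg, not_false_iff] at hs
        rcases Nat.eq_zero_or_pos s with hs0 | hs0
        · subst hs0
          simp only [if_pos rfl]
          intro hmem
          exact h (by rw [hcapdef]; exact Finset.mem_filter.mpr ⟨hi, hmem⟩)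
        · have hsne : s ≠ 0 := by omega
          simp only [hsne, if_false, if_neg, not_false_iff]
          exact hC i hi' (s - 1) (by omega)
    · intro s hs v hdist
      rcases Nat.eq_zero_or_pos s with hs0 | hs0
      · subst hs0
        simp at hdist
        by_contra hcon
        push_neg at hcon
        have heq : R.filter (fun i => 0 ≤ (if i ∈ cap then 0 else e' i + 1) ∧
            v ∈ (tpath hc (x i) r).support) = R.filter (fun i => v ∈ (tpath hc (x i) r).support) := by
          apply Finset.filter_congr
          intro i _
          simp only [Nat.zero_le, true_and]
        rw [heq] at hcon
        have hvT : v ∈ Finset.univ.filter (fun v : V =>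
            n ≤ k * (R.filter (fun i => v ∈ (tpath hc (x i) r).support)).card) :=
          Finset.mem_filter.mpr ⟨Finset.mem_univ _, hcon⟩
        have := hv₀max v hvT
        omega
      · have hsne : s ≠ 0 := by omega
        simp only [hsne, if_false, if_neg, not_false_iff] at hdist
        have heq : R.filter (fun i => s ≤ (if i ∈ cap then 0 else e' i + 1) ∧
            v ∈ (tpath hc (x i) r).support)
            = R'.filter (fun i => s - 1 ≤ e' i ∧ v ∈ (tpath hc (x i) r).support) := by
          ext i
          simp only [Finset.mem_filter, hR'def, Finset.mem_sdiff]
          constructor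
          · rintro ⟨hiR, hse, hv⟩
            by_cases h : i ∈ cap
            · simp only [h, if_true, if_pos] at hse; omega
            · simp only [h, if_false, if_neg, not_false_iff] at hse
              exact ⟨⟨hiR, h⟩, by omega, hv⟩
          · rintro ⟨⟨hiR, h⟩, hse, hv⟩
            refine ⟨hiR, ?_, hv⟩
            simp only [h, if_false, if_neg, not_false_iff]
            omega
        rw [heq]
        exact hD (s - 1) (by omega) v hdist
    · -- budget
      have hcard : R.card = R'.card + cap.card := by
        rw [hR'def]
        have := Finset.card_sdiff_add_card_eq_card hcapsub
        omega
      rcases hG with h1 | ⟨ℓ, hl1, hl2, hl3, hl4⟩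
      · left
        have e1 : n * (m' + 1) = n * m' + n := by ring
        have e2 : k * R.card = k * R'.card + k * cap.card := by rw [hcard]; ring
        omega
      · right
        refine ⟨ℓ, hl1, hl2, by omega, ?_⟩
        have e1 : n * (m' + 1) = n * m' + n := by ring
        have e2 : k * (R.card - ℓ) = k * (R'.card - ℓ) + k * cap.card := by
          rw [hcard]
          have : R'.card + cap.card - ℓ = (R'.card - ℓ) + cap.card := by omega
          rw [this]; ring
        omega
  · -- no rule event possible
    have hsmall : ∀ v : V, k * (R.filter (fun i => v ∈ (tpath hc (x i) r).support)).card < n := by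
      intro v
      by_contra h
      push_neg at h
      exact hT ⟨v, Finset.mem_filter.mpr ⟨Finset.mem_univ _, h⟩⟩
    rcases Finset.eq_empty_or_nonempty R with hR | hR
    · subst hR
      exact ⟨0, fun _ => r, fun _ => 0, by simp, by simp, by simp, by omega, Or.inl (by simp)⟩
    · refine ⟨1, fun _ => r, fun _ => 0, fun i _ => Nat.zero_lt_one, ?_, ?_, ?_, ?_⟩
      · intro i _
        exact SimpleGraph.Walk.end_mem_support _
      · intro i _ s hs
        exact absurd hs (Nat.not_lt_zero s)
      · intro s hs v _
        have heq : R.filter (fun i => s ≤ (fun (_ : Fin n) => 0) i ∧ v ∈ (tpath hc (x i) r).support)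
            ⊆ R.filter (fun i => v ∈ (tpath hc (x i) r).support) := by
          intro i hi
          rw [Finset.mem_filter] at hi ⊢
          exact ⟨hi.1, hi.2.2⟩
        have h1 : k * (R.filter (fun i => s ≤ (fun (_ : Fin n) => 0) i ∧ v ∈ (tpath hc (x i) r).support)).card
            ≤ k * (R.filter (fun i => v ∈ (tpath hc (x i) r).support)).card :=
          Nat.mul_le_mul_left _ (Finset.card_le_card heq)
        have h2 := hsmall v
        omega
      · right
        refine ⟨R.card, hR.card_pos, ?_, le_refl _, by simp⟩
        have heq : R.filter (fun i => r ∈ (tpath hc (x i) r).support) = R := by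
          apply Finset.filter_true_of_mem
          intro i _
          exact SimpleGraph.Walk.end_mem_support _
        have := hsmall r
        rw [heq] at this
        exact this


end TreeCore

set_option maxHeartbeats 1000000 in
open SimpleGraph in
theorem stmt13 {V : Type*} [Fintype V] (G : SimpleGraph V)
    (hGconn : G.Connected) (hGacyc : G.IsAcyclic)
    {n k : ℕ} (hn : 0 < n) (hk : 0 < k) (x : Fin n → V) :
    ∃ Y : Fin k → V,
      ∀ S : Finset (Fin n), 2 * (n : ℝ) / (k : ℝ) ≤ S.card →
        ∀ y' : V,
          ∑ i ∈ S, treeClusterCost G Y (x i) ≤ ∑ i ∈ S, (G.dist (x i) y' : ℝ) := by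
  classical
  obtain ⟨r⟩ : Nonempty V := hGconn.nonempty
  obtain ⟨m, c, e, hA, hB, hC, hD, hG⟩ := TreeCore.alg_ex hGconn r hn hk x Finset.univ
  have hcardu : (Finset.univ : Finset (Fin n)).card = n := by simp
  -- m ≤ k
  have hmk : m ≤ k := by
    rcases hG with h1 | ⟨ℓ, hl1, hl2, hl3, hl4⟩
    · rw [hcardu] at h1
      by_contra hcon
      push_neg at hcon
      have : n * (k + 1) ≤ n * m := Nat.mul_le_mul_left _ (by omega)
      have e1 : n * (k+1) = n * k + n := by ring
      have e2 : k * n = n * k := by ring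
      omega
    · rw [hcardu] at hl3 hl4
      by_contra hcon
      push_neg at hcon
      have h5 : n * (k + 1) ≤ n * m := Nat.mul_le_mul_left _ (by omega)
      have e1 : n * (k+1) = n * k + n := by ring
      have h6 : k * (n - ℓ) + k * ℓ = k * n := by
        rw [← Nat.mul_add]
        congr 1
        omega
      have e2 : k * n = n * k := by ring
      have h8 : 1 * 1 ≤ k * ℓ := Nat.mul_le_mul hk hl1
      omega
  -- m ≥ 1
  have hm1 : 1 ≤ m := by
    have := hA ⟨0, hn⟩ (Finset.mem_univ _)
    omega
  -- the clustering
  set Y : Fin k → V := fun j => if h : (j : ℕ) < m then c j else c 0 with hYdef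
  have hYc : ∀ s, s < m → ∃ j : Fin k, Y j = c s := by
    intro s hs
    exact ⟨⟨s, lt_of_lt_of_le hs hmk⟩, by simp [hYdef, hs]⟩
  have hcY : ∀ j : Fin k, ∃ s, s < m ∧ Y j = c s := by
    intro j
    by_cases h : (j : ℕ) < m
    · exact ⟨j, h, by simp [hYdef, h]⟩
    · exact ⟨0, hm1, by simp [hYdef, h]⟩
  refine ⟨Y, ?_⟩
  intro S hS y'
  -- basic facts about the cost
  have hne : (Set.range fun j => (G.dist y' (Y j) : ℝ)).Nonempty :=
    Set.range_nonempty (ι := Fin k) (h := ⟨⟨0, hk⟩⟩) _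
  have hcost_le : ∀ p : V, ∀ j : Fin k, treeClusterCost G Y p ≤ (G.dist p (Y j) : ℝ) := by
    intro p j
    apply csInf_le (Set.Finite.bddBelow (Set.finite_range _))
    exact ⟨j, rfl⟩
  set D₀ : ℝ := treeClusterCost G Y y' with hD₀def
  have hD₀mem : D₀ ∈ Set.range fun j => (G.dist y' (Y j) : ℝ) :=
    Set.Nonempty.csInf_mem hne (Set.finite_range _)
  have hD₀nonneg : 0 ≤ D₀ := by
    apply le_csInf hne
    rintro b ⟨j, rfl⟩
    exact Nat.cast_nonneg _
  have hD₀le : ∀ s, s < m → D₀ ≤ (G.dist (c s) y' : ℝ) := by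
    intro s hs
    obtain ⟨j, hj⟩ := hYc s hs
    have := hcost_le y' j
    rw [hj] at this
    rw [SimpleGraph.dist_comm (u := c s) (v := y')]
    exact this
  -- global upper bound: cost ≤ d + D₀
  have hupper : ∀ i : Fin n,
      treeClusterCost G Y (x i) ≤ (G.dist (x i) y' : ℝ) + D₀ := by
    intro i
    obtain ⟨j₀, hj₀⟩ := hD₀mem
    have hj₀' : D₀ = (G.dist y' (Y j₀) : ℝ) := by simpa using hj₀.symm
    have h1 := hcost_le (x i) j₀
    have h2 : G.dist (x i) (Y j₀) ≤ G.dist (x i) y' + G.dist y' (Y j₀) :=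
      hGconn.dist_triangle
    have h3 : (G.dist (x i) (Y j₀) : ℝ) ≤ (G.dist (x i) y' : ℝ) + (G.dist y' (Y j₀) : ℝ) := by
      exact_mod_cast h2
    rw [hj₀']
    linarith
  -- "good agent" property
  have hgood : ∀ i : Fin n, (∃ s, s < m ∧
      G.dist (x i) y' = G.dist (x i) (c s) + G.dist (c s) y') →
      treeClusterCost G Y (x i) + D₀ ≤ (G.dist (x i) y' : ℝ) := by
    rintro i ⟨s, hs, hsep⟩
    obtain ⟨j, hj⟩ := hYc s hs
    have h1 := hcost_le (x i) j
    rw [hj] at h1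
    have h2 := hD₀le s hs
    have h3 : (G.dist (x i) y' : ℝ) = (G.dist (x i) (c s) : ℝ) + (G.dist (c s) y' : ℝ) := by
      exact_mod_cast hsep
    linarith
  by_cases hanc : ∃ s, s < m ∧ c s ∈ (TreeCore.tpath hGconn y' r).support
  · -- some event vertex is an ancestor of y'
    have hancd : ∃ s, s < m ∧ c s ∈ (TreeCore.tpath hGconn y' r).support := hanc
    set s₀ := Nat.find hancd with hs₀def
    obtain ⟨hs₀m, hs₀anc⟩ := Nat.find_spec hancd
    have hmin : ∀ t, t < s₀ → ¬(t < m ∧ c t ∈ (TreeCore.tpath hGconn y' r).support) :=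
      fun t ht => Nat.find_min hancd ht
    by_cases hcy : c s₀ = y'
    · -- y' is a center
      have : ∀ i ∈ S, treeClusterCost G Y (x i) ≤ (G.dist (x i) y' : ℝ) := by
        intro i _
        obtain ⟨j, hj⟩ := hYc s₀ hs₀m
        have h1 := hcost_le (x i) j
        rw [hj, hcy] at h1
        exact h1
      exact Finset.sum_le_sum this
    · -- main case: get the child w
      obtain ⟨w, hwmem, hwdepth, hwsep⟩ := TreeCore.child hGconn hGacyc hcy hs₀anc
      set Z : Finset (Fin n) := Finset.univ.filter
        (fun i => s₀ ≤ e i ∧ w ∈ (TreeCore.tpath hGconn (x i) r).support) with hZdef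
      have hZcard : k * Z.card < n := by
        have := hD s₀ hs₀m w (by omega)
        exact this
      -- every agent not in Z is good
      have hnotZ : ∀ i : Fin n, i ∉ Z →
          treeClusterCost G Y (x i) + D₀ ≤ (G.dist (x i) y' : ℝ) := by
        intro i hiZ
        rw [hZdef, Finset.mem_filter] at hiZ
        push_neg at hiZ
        have hiZ' := hiZ (Finset.mem_univ i)
        by_cases hw : w ∈ (TreeCore.tpath hGconn (x i) r).support
        · -- then e i < s₀, use the capture center
          have hei : e i < s₀ := by
            rcases Nat.lt_or_ge (e i) s₀ with h | h
            · exact h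
            · exact absurd hw (hiZ' h)
          have heim : e i < m := hA i (Finset.mem_univ i)
          have hnanc : c (e i) ∉ (TreeCore.tpath hGconn y' r).support := by
            intro hmem
            exact hmin (e i) hei ⟨heim, hmem⟩
          have hsep := TreeCore.sep hGconn hGacyc (hB i (Finset.mem_univ i)) hnanc
          exact hgood i ⟨e i, heim, hsep⟩
        · -- x i outside subtree of w: separation through c s₀
          have hsep := hwsep (x i) y' hw hwmem
          have hsep2 : G.dist (x i) y' = G.dist (x i) (c s₀) + G.dist (c s₀) y' := by
            have c1 : G.dist (x i) y' = G.dist y' (x i) := SimpleGraph.dist_comm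
            have c2 : G.dist y' (c s₀) = G.dist (c s₀) y' := SimpleGraph.dist_comm
            have c3 : G.dist (c s₀) (x i) = G.dist (x i) (c s₀) := SimpleGraph.dist_comm
            omega
          exact hgood i ⟨s₀, hs₀m, hsep2⟩
      -- split the sum
      have hsplit : ∑ i ∈ S, treeClusterCost G Y (x i)
          = ∑ i ∈ S ∩ Z, treeClusterCost G Y (x i) + ∑ i ∈ S \ Z, treeClusterCost G Y (x i) :=
        (Finset.sum_inter_add_sum_sdiff S Z _).symm
      have hsplit2 : ∑ i ∈ S, (G.dist (x i) y' : ℝ)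
          = ∑ i ∈ S ∩ Z, (G.dist (x i) y' : ℝ) + ∑ i ∈ S \ Z, (G.dist (x i) y' : ℝ) :=
        (Finset.sum_inter_add_sum_sdiff S Z _).symm
      have hb1 : ∑ i ∈ S ∩ Z, treeClusterCost G Y (x i)
          ≤ ∑ i ∈ S ∩ Z, ((G.dist (x i) y' : ℝ) + D₀) :=
        Finset.sum_le_sum (fun i _ => hupper i)
      have hb2 : ∑ i ∈ S \ Z, treeClusterCost G Y (x i)
          ≤ ∑ i ∈ S \ Z, ((G.dist (x i) y' : ℝ) - D₀) := by
        apply Finset.sum_le_sum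
        intro i hi
        have := hnotZ i (Finset.mem_sdiff.mp hi).2
        linarith
      rw [Finset.sum_add_distrib, Finset.sum_const, nsmul_eq_mul] at hb1
      rw [Finset.sum_sub_distrib, Finset.sum_const, nsmul_eq_mul] at hb2
      -- counting
      have hcnt : ((S ∩ Z).card : ℝ) ≤ ((S \ Z).card : ℝ) := by
        have h1 : (S ∩ Z).card ≤ Z.card := Finset.card_le_card Finset.inter_subset_right
        have h2 : (S ∩ Z).card + (S \ Z).card = S.card := Finset.card_inter_add_card_sdiff S Z
        -- k * Z.card < n, so Z.card < n/k; S.card ≥ 2n/k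
        have hkpos : (0 : ℝ) < k := by exact_mod_cast hk
        have hZr : (Z.card : ℝ) < (n : ℝ) / k := by
          rw [lt_div_iff₀ hkpos]
          have : (k : ℝ) * Z.card < n := by exact_mod_cast hZcard
          linarith
        have h1r : ((S ∩ Z).card : ℝ) ≤ (Z.card : ℝ) := by exact_mod_cast h1
        have h2r : ((S ∩ Z).card : ℝ) + ((S \ Z).card : ℝ) = (S.card : ℝ) := by exact_mod_cast h2
        have hSr : 2 * (n : ℝ) / k ≤ (S.card : ℝ) := hS
        have : 2 * (n : ℝ) / k = 2 * ((n : ℝ) / k) := by ring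
        linarith
      have : ((S ∩ Z).card : ℝ) * D₀ ≤ ((S \ Z).card : ℝ) * D₀ :=
        mul_le_mul_of_nonneg_right hcnt hD₀nonneg
      linarith
  · -- no event vertex is an ancestor of y': every agent is good
    push_neg at hanc
    have : ∀ i ∈ S, treeClusterCost G Y (x i) ≤ (G.dist (x i) y' : ℝ) := by
      intro i _
      have heim : e i < m := hA i (Finset.mem_univ i)
      have hnanc : c (e i) ∉ (TreeCore.tpath hGconn y' r).support := hanc (e i) heim
      have hsep := TreeCore.sep hGconn hGacyc (hB i (Finset.mem_univ i)) hnanc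
      have := hgood i ⟨e i, heim, hsep⟩
      linarith
    exact Finset.sum_le_sum this
end

section
/- For every real ε with 0 < ε ≤ 1, there exist a finite connected acyclic simple graph G (a tree, in fact a path) on a vertex set V, a positive integer k, and agents x : Fin n → V at vertices (with M = V and d the graph distance) such that no k-clustering Y : Fin k → V is a (2 − ε, 1)-core clustering; that is, for every Y : Fin k → V there exist a set S ⊆ Fin n with |S| ≥ (2 − ε)·n/k and a vertex y' ∈ V with Σ_{i∈S} d(x_i, y') < Σ_{i∈S} min_{j<k} d(x_i, Y_j). -/
lemma reach_side {n : ℕ} (G' : SimpleGraph (Fin n)) (P : Fin n → Prop)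
    (h : ∀ a b : Fin n, G'.Adj a b → (P a ↔ P b)) {u v : Fin n} (hr : G'.Reachable u v) :
    P u ↔ P v := by
  obtain ⟨W⟩ := hr
  induction W with
  | nil => rfl
  | cons ha _ ih => exact (h _ _ ha).trans ih

lemma pathGraph_not_reach {n : ℕ} {v w : Fin n} (hvw : (v : ℕ) + 1 = (w : ℕ)) :
    ¬ (SimpleGraph.pathGraph n \ SimpleGraph.fromEdgeSet {s(v, w)}).Reachable v w := by
  intro hr
  have hside := reach_side _ (fun x => (x : ℕ) ≤ (v : ℕ)) ?_ hr
  · simp only [le_refl, true_iff] at hside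
    omega
  · intro a b hab
    obtain ⟨hadj, hne⟩ := hab
    rw [SimpleGraph.pathGraph_adj] at hadj
    simp only [SimpleGraph.fromEdgeSet_adj, Set.mem_singleton_iff, not_and, not_ne_iff] at hne
    constructor
    · intro hav
      by_contra hbv
      have hab' : (a : ℕ) = (v : ℕ) ∧ (b : ℕ) = (w : ℕ) := by omega
      have ha' : a = v := Fin.ext hab'.1
      have hb : b = w := Fin.ext hab'.2
      subst ha'; subst hb
      have hcontra : (a:ℕ) = (b:ℕ) := congrArg Fin.val (hne rfl)
      omega
    · intro hbv
      by_contra hav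
      have hab' : (b : ℕ) = (v : ℕ) ∧ (a : ℕ) = (w : ℕ) := by omega
      have hbv' : b = v := Fin.ext hab'.1
      have ha : a = w := Fin.ext hab'.2
      subst hbv'; subst ha
      have hcontra : (a:ℕ) = (b:ℕ) := congrArg Fin.val (hne Sym2.eq_swap)
      omega

lemma pathGraph_isAcyclic (n : ℕ) : (SimpleGraph.pathGraph n).IsAcyclic := by
  rw [SimpleGraph.isAcyclic_iff_forall_adj_isBridge]
  intro v w hvw
  rcases SimpleGraph.pathGraph_adj.mp hvw with h | h
  · rw [SimpleGraph.isBridge_iff]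
    exact pathGraph_not_reach h
  · have : s(v, w) = s(w, v) := Sym2.eq_swap
    rw [this, SimpleGraph.isBridge_iff]
    exact pathGraph_not_reach h

theorem stmt14 (ε : ℝ) (hε0 : 0 < ε) (hε1 : ε ≤ 1) :
    ∃ (m : ℕ) (G : SimpleGraph (Fin m)), G.Connected ∧ G.IsAcyclic ∧
      ∃ (n k : ℕ), 0 < n ∧ 0 < k ∧
        ∃ x : Fin n → Fin m,
          ∀ Y : Fin k → Fin m,
            ∃ S : Finset (Fin n), (2 - ε) * (n : ℝ) / (k : ℝ) ≤ S.card ∧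
              ∃ y' : Fin m,
                ∑ i ∈ S, (G.dist (x i) y' : ℝ) < ∑ i ∈ S, treeClusterCost G Y (x i) := by
  set k : ℕ := ⌈(4:ℝ)/ε⌉₊ with hkdef
  have hk4 : (4:ℝ)/ε ≤ k := Nat.le_ceil _
  have hkpos : 0 < k := by
    rw [hkdef]
    have : (0:ℝ) < 4/ε := by positivity
    exact Nat.ceil_pos.mpr this
  have hεk : 4 ≤ ε * k := by
    rw [div_le_iff₀ hε0] at hk4
    linarith [hk4]
  have hkR : (0:ℝ) < (k : ℝ) := by exact_mod_cast hkpos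
  refine ⟨k + 1, SimpleGraph.pathGraph (k+1), SimpleGraph.pathGraph_connected k,
    pathGraph_isAcyclic _, (k+1)*k, k, Nat.mul_pos (Nat.succ_pos k) hkpos, hkpos,
    fun i => (finProdFinEquiv.symm i).1, ?_⟩
  intro Y
  set G := SimpleGraph.pathGraph (k+1) with hGdef
  have hconn : G.Connected := SimpleGraph.pathGraph_connected k
  set C : Fin (k+1) → ℝ := fun p => treeClusterCost G Y p with hCdef
  -- the cost is attained and is a lower bound
  have hmem : ∀ p : Fin (k+1), ∃ j : Fin k, C p = (G.dist p (Y j) : ℝ) := by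
    intro p
    have hne : (Set.range fun j => (G.dist p (Y j):ℝ)).Nonempty := ⟨_, ⟨⟨0, hkpos⟩, rfl⟩⟩
    obtain ⟨j, hj⟩ := hne.csInf_mem (Set.finite_range _)
    exact ⟨j, hj.symm⟩
  have hle : ∀ (p : Fin (k+1)) (j : Fin k), C p ≤ (G.dist p (Y j) : ℝ) := fun p j =>
    csInf_le (Set.finite_range _).bddBelow ⟨j, rfl⟩
  choose jsel hjsel using hmem
  -- pigeonhole
  obtain ⟨v₀, w₀, hne₀, heq₀⟩ := Fintype.exists_ne_map_eq_of_card_lt jsel (by simp)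
  obtain ⟨v, w, hvw, hjeq, hCle⟩ : ∃ v w : Fin (k+1), v ≠ w ∧ jsel v = jsel w ∧ C w ≤ C v := by
    rcases le_total (C w₀) (C v₀) with h | h
    · exact ⟨v₀, w₀, hne₀, heq₀, h⟩
    · exact ⟨w₀, v₀, hne₀.symm, heq₀.symm, h⟩
  have hCv_eq : C v = (G.dist v (Y (jsel v)) : ℝ) := hjsel v
  have hCw_eq : C w = (G.dist w (Y (jsel v)) : ℝ) := by rw [hjeq]; exact hjsel w
  have hCw0 : 0 ≤ C w := by rw [hCw_eq]; positivity
  have hCv_pos : 0 < C v := by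
    rcases lt_or_eq_of_le (hCw0.trans hCle) with h | h
    · exact h
    · exfalso
      have hv0 : G.dist v (Y (jsel v)) = 0 := by
        have hcv : ((G.dist v (Y (jsel v)) : ℕ) : ℝ) = 0 := by rw [← hCv_eq]; exact h.symm
        exact_mod_cast hcv
      have hw0 : G.dist w (Y (jsel v)) = 0 := by
        have hCw : C w = 0 := le_antisymm (h ▸ hCle) hCw0
        have hcw : ((G.dist w (Y (jsel v)) : ℕ) : ℝ) = 0 := by rw [← hCw_eq]; exact hCw
        exact_mod_cast hcw
      have hveq : v = Y (jsel v) := (hconn.dist_eq_zero_iff).mp hv0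
      have hweq : w = Y (jsel v) := (hconn.dist_eq_zero_iff).mp hw0
      exact hvw (hveq.trans hweq.symm)
  have htri : (G.dist w v : ℝ) ≤ C w + C v := by
    have h1 : G.dist w v ≤ G.dist w (Y (jsel v)) + G.dist (Y (jsel v)) v := hconn.dist_triangle
    have h2 : G.dist (Y (jsel v)) v = G.dist v (Y (jsel v)) := SimpleGraph.dist_comm
    rw [hCw_eq, hCv_eq]
    exact_mod_cast h2 ▸ h1
  -- the blocking coalition
  have hdisj : Disjoint (({v} : Finset (Fin (k+1))) ×ˢ (Finset.univ : Finset (Fin k)))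
      (({w} : Finset (Fin (k+1))) ×ˢ (Finset.univ.erase ⟨0, hkpos⟩)) := by
    rw [Finset.disjoint_left]
    rintro ⟨a, b⟩ ha hb
    simp only [Finset.mem_product, Finset.mem_singleton] at ha hb
    exact hvw (ha.1 ▸ hb.1 ▸ rfl)
  set T : Finset (Fin (k+1) × Fin k) :=
    (({v} : Finset (Fin (k+1))) ×ˢ (Finset.univ : Finset (Fin k))) ∪
      (({w} : Finset (Fin (k+1))) ×ˢ (Finset.univ.erase ⟨0, hkpos⟩)) with hTdef
  refine ⟨T.map finProdFinEquiv.toEmbedding, ?_, v, ?_⟩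
  · -- cardinality bound
    have hcard : (T.map finProdFinEquiv.toEmbedding).card = k + (k - 1) := by
      rw [Finset.card_map, hTdef, Finset.card_union_of_disjoint hdisj]
      simp [Finset.card_erase_of_mem]
    rw [hcard]
    have hcast : ((k + (k-1) : ℕ) : ℝ) = 2 * (k:ℝ) - 1 := by
      have : ((k - 1 : ℕ) : ℝ) = (k:ℝ) - 1 := by
        rw [Nat.cast_sub hkpos]; norm_num
      push_cast [this]; ring
    rw [hcast]
    have hncast : (((k+1)*k : ℕ) : ℝ) = ((k:ℝ)+1) * k := by push_cast; ring
    rw [hncast]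
    rw [div_le_iff₀ hkR]
    nlinarith [hεk, hkR, hε0, mul_pos hε0 hkR]
  · -- the strict improvement
    have hsum : ∀ f : Fin (k+1) → ℝ,
        ∑ i ∈ T.map finProdFinEquiv.toEmbedding, f ((finProdFinEquiv.symm i).1)
          = (k : ℝ) * f v + ((k : ℝ) - 1) * f w := by
      intro f
      rw [Finset.sum_map]
      simp only [Equiv.coe_toEmbedding, Equiv.symm_apply_apply]
      rw [hTdef, Finset.sum_union hdisj]
      rw [Finset.sum_product, Finset.sum_product]
      simp only [Finset.sum_singleton, Finset.sum_const, nsmul_eq_mul]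
      rw [Finset.card_univ, Fintype.card_fin, Finset.card_erase_of_mem (Finset.mem_univ _),
        Finset.card_univ, Fintype.card_fin]
      have : ((k - 1 : ℕ) : ℝ) = (k:ℝ) - 1 := by
        rw [Nat.cast_sub hkpos]; norm_num
      rw [this]
    rw [hsum (fun p => (G.dist p v : ℝ)), hsum C]
    have hdvv : (G.dist v v : ℝ) = 0 := by
      simp [SimpleGraph.dist_self]
    simp only [hdvv, mul_zero, zero_add]
    have hk1R : (0:ℝ) ≤ (k:ℝ) - 1 := by
      have : (1:ℝ) ≤ (k:ℝ) := by exact_mod_cast hkpos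
      linarith
    nlinarith [mul_le_mul_of_nonneg_left htri hk1R, hCv_pos, hCw0]
end

section
/- Let k ≥ 2 and n = 2k, and let (X,d) be a metric space containing points x_1, …, x_n with d(x_i, x_j) = 1 for all i ≠ j. Take the agents to be x : Fin n → X given by these n points and M = {x_1, …, x_n}. Then for every real α with 1 ≤ α ≤ k/2 and every k-clustering Y : Fin k → M, there exist a set S ⊆ Fin n with |S| ≥ α·n/k and a point y' ∈ M such that Σ_{i∈S} d(x_i, y') < Σ_{i∈S} min_{j<k} d(x_i, Y_j). In particular, no k-clustering of this instance is an (α, 1)-core clustering for any α ≤ k/2 = n/4. -/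
theorem stmt16 {X : Type*} [MetricSpace X] {n k : ℕ} (hk : 2 ≤ k) (hn : n = 2 * k)
    (x : Fin n → X) (hx : ∀ i j, i ≠ j → dist (x i) (x j) = 1)
    (α : ℝ) (hα1 : 1 ≤ α) (hα2 : α ≤ (k : ℝ) / 2)
    (Y : Fin k → X) (hY : ∀ j, Y j ∈ Set.range x) :
    ∃ S : Finset (Fin n), α * (n : ℝ) / (k : ℝ) ≤ S.card ∧
      ∃ y' ∈ Set.range x,
        ∑ i ∈ S, dist (x i) y' < ∑ i ∈ S, clusterCost Y (x i) := by
  have hkpos : 0 < k := by omega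
  have hkne : (Nonempty (Fin k)) := ⟨⟨0, hkpos⟩⟩
  choose g hg using hY
  set C : Finset (Fin n) := Finset.univ.image g with hC
  have hCcard : C.card ≤ k := le_trans Finset.card_image_le (by simp)
  set U := Cᶜ with hU
  have hUcard : k ≤ U.card := by
    have h1 : U.card = n - C.card := by
      rw [hU, Finset.card_compl, Fintype.card_fin]
    omega
  obtain ⟨i0, hi0⟩ : U.Nonempty := Finset.card_pos.mp (by omega)
  have hnotC : ∀ i ∈ U, ∀ j, g j ≠ i := by
    intro i hi j hji
    exact (Finset.mem_compl.mp hi) (Finset.mem_image.mpr ⟨j, Finset.mem_univ j, hji⟩)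
  have hcost : ∀ i ∈ U, clusterCost Y (x i) = 1 := by
    intro i hi
    have hval : ∀ j, dist (x i) (Y j) = 1 := by
      intro j
      rw [← hg j]
      exact hx i (g j) (fun h => hnotC i hi j h.symm)
    unfold clusterCost
    have hrange : (Set.range fun j => dist (x i) (Y j)) = {1} := by
      ext r
      simp only [Set.mem_range, hval, Set.mem_singleton_iff]
      exact ⟨fun ⟨j, hj⟩ => hj.symm, fun h => ⟨⟨0, hkpos⟩, h.symm⟩⟩
    rw [hrange, csInf_singleton]
  refine ⟨U, ?_, x i0, ⟨i0, rfl⟩, ?_⟩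
  · have h1 : α * (n : ℝ) / (k : ℝ) = 2 * α := by
      rw [hn]
      push_cast
      field_simp
    rw [h1]
    have h2 : (2 : ℝ) * α ≤ (k : ℝ) := by linarith
    have h3 : (k : ℝ) ≤ (U.card : ℝ) := by exact_mod_cast hUcard
    linarith
  · have hrhs : ∑ i ∈ U, clusterCost Y (x i) = (U.card : ℝ) := by
      rw [Finset.sum_congr rfl hcost, Finset.sum_const, nsmul_eq_mul, mul_one]
    have hlhs : ∑ i ∈ U, dist (x i) (x i0) = ((U.erase i0).card : ℝ) := by
      rw [← Finset.add_sum_erase U _ hi0, dist_self, zero_add]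
      rw [Finset.sum_congr rfl (fun i hi => hx i i0 (Finset.ne_of_mem_erase hi))]
      rw [Finset.sum_const, nsmul_eq_mul, mul_one]
    rw [hrhs, hlhs]
    exact_mod_cast Finset.card_erase_lt_of_mem hi0
end
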